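/- arXiv:2105.12915 — 2 statements merged into one kernel-verified Lean document; each statement's English description precedes it below -/
import Mathlib

section
/- Let X ⊂ ℝ be a finite set of prizes, c : 𝒜 → 𝒜 a choice correspondence on finite nonempty sets of lotteries satisfying FOSD and Continuity, and R a risk-consistent linear order on Δ(X) such that for every r ∈ Δ(X), c satisfies WARP and Independence over {B ∈ 𝒜 : r ∈ B and r R p for all p ∈ B}. Then for every r ∈ I := Δ(X) \ Δ({b,w}), the set ℙ₊^r := {p ∈ Δ(X) : r R p and r ∉ c({p,r})} contains a convex subset of Δ(X) of affine dimension |X| − 1. -/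
open scoped BigOperators

noncomputable section

/-- Lotteries over the finite prize set `X ⊂ ℝ`, as a subset of Euclidean space `ℝ^X`. -/
abbrev Lot (X : Finset ℝ) : Type :=
  {p : EuclideanSpace ℝ ↥X // (∀ x, 0 ≤ p x) ∧ ∑ x, p x = 1}

variable {X : Finset ℝ}

noncomputable instance : DecidableEq (Lot X) := Classical.decEq _

/-- The degenerate distribution on prize `x`, as a vector. -/
def degv (x : ↥X) : EuclideanSpace ℝ ↥X := WithLp.toLp 2 (fun y => if y = x then 1 else 0)

/-- The degenerate lottery `δ_x`. -/
def deg (x : ↥X) : Lot X :=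
  ⟨degv x, fun y => by by_cases h : y = x <;> simp [degv, h], by simp [degv]⟩

/-- The mixture `αp + (1-α)q`, as a vector. -/
def mixv (α : ℝ) (p q : Lot X) : EuclideanSpace ℝ ↥X := α • p.1 + (1 - α) • q.1

/-- The best prize `b = max X` as an element of `X`. -/
def bIdx (hX : X.Nonempty) : ↥X := ⟨X.max' hX, X.max'_mem hX⟩

/-- The worst prize `w = min X` as an element of `X`. -/
def wIdx (hX : X.Nonempty) : ↥X := ⟨X.min' hX, X.min'_mem hX⟩

/-- `p` first-order stochastically dominates `q`. -/
def FOSDom (p q : Lot X) : Prop :=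
  ∀ z ∈ X, (∑ x : ↥X, if z ≤ (x : ℝ) then q.1 x else 0) ≤
    ∑ x : ↥X, if z ≤ (x : ℝ) then p.1 x else 0

/-- `p` is a mean-preserving spread of `q`. -/
def MPS (p q : Lot X) : Prop :=
  p ≠ q ∧ (∑ x : ↥X, p.1 x * (x : ℝ)) = (∑ x : ↥X, q.1 x * (x : ℝ)) ∧
  ∀ z : ℝ, (∑ x : ↥X, q.1 x * max (z - (x : ℝ)) 0) ≤
    ∑ x : ↥X, p.1 x * max (z - (x : ℝ)) 0

/-- `p` is an extreme spread of `q`. -/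
def ES (hX : X.Nonempty) (p q : Lot X) : Prop :=
  ∃ β α : ℝ, 0 ≤ β ∧ β < 1 ∧ q.1 (bIdx hX) < α ∧ α < 1 - q.1 (wIdx hX) ∧
    p.1 = β • q.1 + (1 - β) • (α • degv (bIdx hX) + (1 - α) • degv (wIdx hX))

/-- A reference order is risk-consistent if safer lotteries rank higher. -/
def RiskConsistent (hX : X.Nonempty) (R : Lot X → Lot X → Prop) : Prop :=
  ∀ p q : Lot X, (MPS p q ∨ ES hX p q) → R q p

/-- `p` is a mixture of `δ_b` and `δ_w`, i.e. `p ∈ Δ({b,w})`. -/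
def inBW (hX : X.Nonempty) (p : Lot X) : Prop :=
  ∀ x : ↥X, x ≠ bIdx hX → x ≠ wIdx hX → p.1 x = 0

/-- Expected utility of lottery `p` under Bernoulli utility `u`. -/
def EV (p : Lot X) (u : ↥X → ℝ) : ℝ := ∑ x : ↥X, p.1 x * u x

/-- `c` satisfies WARP over a collection `S` of choice problems. -/
def WARPover (c : Finset (Lot X) → Finset (Lot X)) (S : Set (Finset (Lot X))) : Prop :=
  ∀ A ∈ S, ∀ B ∈ S, B ⊆ A → (c A ∩ B).Nonempty → c A ∩ B = c B

/-- `c` satisfies Independence over a collection `S` of choice problems. -/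
def IndepOver (c : Finset (Lot X) → Finset (Lot X)) (S : Set (Finset (Lot X))) : Prop :=
  ∀ A ∈ S, ∀ B ∈ S, ∀ α : ℝ, 0 < α → α < 1 →
    ∀ p q s pas qas : Lot X, pas.1 = mixv α p s → qas.1 = mixv α q s →
      (p ∈ c A → q ∈ A → qas ∈ c B → pas ∈ B → pas ∈ c B) ∧
      (pas ∈ c A → qas ∈ A → q ∈ c B → p ∈ B → p ∈ c B)

/-- Continuity: `c` has a closed graph w.r.t. the Hausdorff distance. -/
def ClosedGraphC (c : Finset (Lot X) → Finset (Lot X)) : Prop :=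
  ∀ (x : Lot X) (xs : ℕ → Lot X) (A : Finset (Lot X)) (As : ℕ → Finset (Lot X)),
    A.Nonempty → (∀ n, (As n).Nonempty) →
    Filter.Tendsto xs Filter.atTop (nhds x) →
    Filter.Tendsto (fun n => Metric.hausdorffDist ((As n : Set (Lot X))) (A : Set (Lot X)))
      Filter.atTop (nhds 0) →
    (∀ n, xs n ∈ c (As n)) → x ∈ c A

/-- `c` admits an AREU representation with data `(R, u, r)`. -/
def IsAREU (hX : X.Nonempty) (c : Finset (Lot X) → Finset (Lot X))
    (R : Lot X → Lot X → Prop) (u : Lot X → ↥X → ℝ) (r : Finset (Lot X) → Lot X) : Prop :=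
  IsLinearOrder (Lot X) R ∧ RiskConsistent hX R ∧
  (∀ p : Lot X, ∀ x y : ↥X, (x : ℝ) < (y : ℝ) → u p x < u p y) ∧
  (∀ (p : Lot X) (x : ↥X), u p x ∈ Set.Icc (0 : ℝ) 1) ∧
  (∀ A : Finset (Lot X), A.Nonempty → r A ∈ A ∧ ∀ p ∈ A, R (r A) p) ∧
  (∀ A : Finset (Lot X), A.Nonempty → ∀ p : Lot X,
    p ∈ c A ↔ p ∈ A ∧ ∀ q ∈ A, EV q (u (r A)) ≤ EV p (u (r A))) ∧
  (∀ p q : Lot X, R q p → ∃ f : ℝ → ℝ, ConcaveOn ℝ (Set.Icc 0 1) f ∧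
    (∀ t ∈ Set.Icc (0 : ℝ) 1, f t ∈ Set.Icc (0 : ℝ) 1) ∧ ∀ x : ↥X, u q x = f (u p x)) ∧
  ClosedGraphC c


/-- First order stochastic dominance axiom on choice. -/
def FOSDAxiom (c : Finset (Lot X) → Finset (Lot X)) : Prop :=
  ∀ p q : Lot X, p ≠ q → FOSDom p q → ∀ A : Finset (Lot X), p ∈ A → q ∉ c A

-- ===================== auxiliary lemmas =====================

section Helpers

variable {X : Finset ℝ}

lemma vec_le_one (v : EuclideanSpace ℝ ↥X) (h0 : ∀ x, 0 ≤ v x) (h1 : ∑ x, v x = 1)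
    (t : ↥X) : v t ≤ 1 := by
  have := Finset.single_le_sum (f := fun x => v x) (fun i _ => h0 i) (Finset.mem_univ t)
  rw [h1] at this; exact this

lemma vec_norm_le_one (v : EuclideanSpace ℝ ↥X) (h0 : ∀ x, 0 ≤ v x) (h1 : ∑ x, v x = 1) :
    ‖v‖ ≤ 1 := by
  rw [EuclideanSpace.norm_eq]
  have h2 : ∑ x, ‖v x‖ ^ 2 ≤ 1 := by
    rw [← h1]
    refine Finset.sum_le_sum fun i _ => ?_
    have h3 := h0 i
    have h4 := vec_le_one v h0 h1 i
    rw [Real.norm_eq_abs, abs_of_nonneg (h0 i)]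
    nlinarith
  calc √(∑ x, ‖v x‖ ^ 2) ≤ √1 := Real.sqrt_le_sqrt h2
    _ = 1 := Real.sqrt_one

lemma sum_coord {ι : Type*} (s : Finset ι) (g : ι → EuclideanSpace ℝ ↥X) (t : ↥X) :
    (∑ i ∈ s, g i) t = ∑ i ∈ s, g i t := by
  classical
  induction s using Finset.induction_on with
  | empty => simp
  | insert _ _ h ih => rw [Finset.sum_insert h, Finset.sum_insert h, PiLp.add_apply, ih]

lemma sum_apply_add (v u : EuclideanSpace ℝ ↥X) :
    ∑ x, (v + u) x = (∑ x, v x) + ∑ x, u x := by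
  simp [PiLp.add_apply, Finset.sum_add_distrib]

lemma sum_apply_smul (c : ℝ) (v : EuclideanSpace ℝ ↥X) :
    ∑ x, (c • v) x = c * ∑ x, v x := by
  simp [PiLp.smul_apply, Finset.mul_sum]

lemma sum_apply_sub (v u : EuclideanSpace ℝ ↥X) :
    ∑ x, (v - u) x = (∑ x, v x) - ∑ x, u x := by
  simp [PiLp.sub_apply, Finset.sum_sub_distrib]

lemma sum_degv (a : ↥X) : ∑ x, degv (X := X) a x = 1 := by simp [degv]

lemma sum_degv_mul (a : ↥X) : ∑ x : ↥X, degv (X := X) a x * (x : ℝ) = (a : ℝ) := by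
  have : ∀ x : ↥X, degv (X := X) a x * (x : ℝ) = if x = a then (x : ℝ) else 0 := by
    intro x
    simp only [degv, PiLp.toLp_apply]
    split_ifs <;> ring
  rw [Finset.sum_congr rfl fun x _ => this x, Finset.sum_ite_eq']
  simp

def eVec (hX : X.Nonempty) (α : ℝ) : EuclideanSpace ℝ ↥X :=
  WithLp.toLp 2 (fun y => (if y = bIdx hX then α else 0) + (if y = wIdx hX then 1 - α else 0))

lemma eVec_sum (hX : X.Nonempty) (α : ℝ) : ∑ x, eVec hX α x = 1 := by
  simp only [eVec, PiLp.toLp_apply, PiLp.toLp_apply]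
  rw [Finset.sum_add_distrib, Finset.sum_ite_eq', Finset.sum_ite_eq']
  simp

lemma eVec_nonneg (hX : X.Nonempty) {α : ℝ} (h0 : 0 ≤ α) (h1 : α ≤ 1) (y : ↥X) :
    0 ≤ eVec hX α y := by
  simp only [eVec, PiLp.toLp_apply, PiLp.toLp_apply]; split_ifs <;> nlinarith

def eL (hX : X.Nonempty) (α : ℝ) : Lot X :=
  ⟨eVec hX (max 0 (min 1 α)),
   fun y => eVec_nonneg hX (le_max_left _ _) (max_le zero_le_one (min_le_left _ _)) y,
   eVec_sum hX _⟩

lemma eL_val (hX : X.Nonempty) {α : ℝ} (h0 : 0 ≤ α) (h1 : α ≤ 1) :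
    (eL hX α).1 = eVec hX α := by
  show eVec hX (max 0 (min 1 α)) = eVec hX α
  rw [min_eq_right h1, max_eq_right h0]

lemma eVec_sub (hX : X.Nonempty) (a b : ℝ) :
    eVec hX a - eVec hX b = (a - b) • (degv (bIdx hX) - degv (wIdx hX)) := by
  ext y
  simp only [eVec, PiLp.toLp_apply, degv, PiLp.sub_apply, PiLp.smul_apply, smul_eq_mul]
  split_ifs <;> ring

def sumF (X : Finset ℝ) : EuclideanSpace ℝ ↥X →ₗ[ℝ] ℝ where
  toFun v := ∑ x, v x
  map_add' u v := by simp [PiLp.add_apply, Finset.sum_add_distrib]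
  map_smul' c v := by simp [PiLp.smul_apply, Finset.mul_sum]

lemma finrank_ker_sumF (X : Finset ℝ) (hX : X.Nonempty) :
    Module.finrank ℝ (LinearMap.ker (sumF X)) = X.card - 1 := by
  have hr : LinearMap.range (sumF X) = ⊤ := by
    rw [LinearMap.range_eq_top]
    intro t
    refine ⟨t • degv (bIdx hX), ?_⟩
    show (∑ x, (t • degv (bIdx hX)) x) = t
    simp only [PiLp.smul_apply, smul_eq_mul, ← Finset.mul_sum]
    rw [sum_degv, mul_one]
  have h := LinearMap.finrank_range_add_finrank_ker (sumF X)
  rw [hr, finrank_top, Module.finrank_self, finrank_euclideanSpace, Fintype.card_coe] at h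
  have hc : 1 ≤ X.card := Finset.card_pos.mpr hX
  omega

lemma jensen_max (y : EuclideanSpace ℝ ↥X) (h0 : ∀ x, 0 ≤ y x) (h1 : ∑ x, y x = 1)
    (mm t : ℝ) (hm : ∑ x : ↥X, y x * (x : ℝ) = mm) :
    max (t - mm) 0 ≤ ∑ x : ↥X, y x * max (t - (x : ℝ)) 0 := by
  have hsum : (t - mm) = ∑ x : ↥X, y x * (t - (x : ℝ)) := by
    have : ∀ x : ↥X, y x * (t - (x : ℝ)) = t * y x - y x * (x : ℝ) := fun x => by ring
    rw [Finset.sum_congr rfl fun x _ => this x, Finset.sum_sub_distrib, ← Finset.mul_sum, h1, hm]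
    ring
  apply max_le
  · rw [hsum]
    exact Finset.sum_le_sum fun i _ =>
      mul_le_mul_of_nonneg_left (le_max_left _ _) (h0 i)
  · exact Finset.sum_nonneg fun i _ => mul_nonneg (h0 i) (le_max_right _ _)

end Helpers

-- ===================== end auxiliary lemmas =====================
set_option maxHeartbeats 1600000000 in
/-- Lemma 3: under FOSD, Continuity, and reference-dependent WARP and
Independence w.r.t. a risk-consistent linear order `R`, the strict prediction set
`ℙ₊^r = {p : r R p and r ∉ c({p,r})}` of any `r ∉ Δ({b,w})` contains a
full-dimensional convex subset of `Δ(X)`. -/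
theorem stmt13 (X : Finset ℝ) (hX : X.Nonempty) (hcard : 2 ≤ X.card)
    (c : Finset (Lot X) → Finset (Lot X))
    (hc : ∀ A : Finset (Lot X), A.Nonempty → c A ⊆ A ∧ (c A).Nonempty)
    (hFOSD : FOSDAxiom c) (hcont : ClosedGraphC c)
    (R : Lot X → Lot X → Prop) (hlin : IsLinearOrder (Lot X) R)
    (hrc : RiskConsistent hX R)
    (href : ∀ r : Lot X,
      WARPover c {B : Finset (Lot X) | r ∈ B ∧ ∀ p ∈ B, R r p} ∧
      IndepOver c {B : Finset (Lot X) | r ∈ B ∧ ∀ p ∈ B, R r p}) :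
    ∀ r : Lot X, ¬ inBW hX r →
    ∃ C : Set (EuclideanSpace ℝ ↥X),
      (∀ v ∈ C, ∃ p : Lot X, p.1 = v ∧ R r p ∧ r ∉ c {p, r}) ∧
      Convex ℝ C ∧
      Module.finrank ℝ (affineSpan ℝ C).direction = X.card - 1 := by
  intro r hr
  haveI := hlin
  have htrans : ∀ a b c' : Lot X, R a b → R b c' → R a c' := fun a b c' h1 h2 =>
    IsTrans.trans a b c' h1 h2
  unfold inBW at hr
  push_neg at hr
  obtain ⟨m, hmb, hmw, hρne⟩ := hr
  have hρ0 : 0 < r.1 m := lt_of_le_of_ne (r.2.1 m) (Ne.symm hρne)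
  have hwm : (wIdx hX : ℝ) < (m : ℝ) :=
    lt_of_le_of_ne (X.min'_le _ m.2) (fun h => hmw (Subtype.ext h.symm))
  have hmbR : (m : ℝ) < (bIdx hX : ℝ) :=
    lt_of_le_of_ne (X.le_max' _ m.2) (fun h => hmb (Subtype.ext h))
  have hbw : bIdx hX ≠ wIdx hX := by
    intro h
    have h2 : (bIdx hX : ℝ) = (wIdx hX : ℝ) := congrArg Subtype.val h
    linarith
  have hrb0 : 0 ≤ r.1 (bIdx hX) := r.2.1 _
  have hrw0 : 0 ≤ r.1 (wIdx hX) := r.2.1 _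
  have hsum3 : r.1 (bIdx hX) + r.1 (wIdx hX) + r.1 m ≤ 1 := by
    have hsub : ({bIdx hX, wIdx hX, m} : Finset ↥X) ⊆ Finset.univ := Finset.subset_univ _
    have hle := Finset.sum_le_sum_of_subset_of_nonneg hsub (fun i _ _ => r.2.1 i)
    rw [r.2.2] at hle
    have hnotin1 : bIdx hX ∉ ({wIdx hX, m} : Finset ↥X) := by
      simp only [Finset.mem_insert, Finset.mem_singleton]
      push_neg
      exact ⟨hbw, fun h => hmb h.symm⟩
    have hnotin2 : wIdx hX ∉ ({m} : Finset ↥X) := by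
      simp only [Finset.mem_singleton]
      exact fun h => hmw h.symm
    rw [Finset.sum_insert hnotin1, Finset.sum_insert hnotin2, Finset.sum_singleton] at hle
    linarith
  have hgap : r.1 (bIdx hX) < 1 - r.1 (wIdx hX) := by linarith
  -- Hausdorff distance bound for pair menus
  have hpair : ∀ p q : Lot X,
      Metric.hausdorffDist (({p, r} : Finset (Lot X)) : Set (Lot X))
        (({q, r} : Finset (Lot X)) : Set (Lot X)) ≤ dist p q := by
    intro p q
    apply Metric.hausdorffDist_le_of_mem_dist dist_nonneg
    · intro x hx
      simp only [Finset.coe_insert, Set.mem_insert_iff, Finset.coe_singleton,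
        Set.mem_singleton_iff] at hx
      rcases hx with rfl | hxr
      · exact ⟨q, by simp, le_rfl⟩
      · exact ⟨r, by simp, by rw [hxr, dist_self]; exact dist_nonneg⟩
    · intro x hx
      simp only [Finset.coe_insert, Set.mem_insert_iff, Finset.coe_singleton,
        Set.mem_singleton_iff] at hx
      rcases hx with hxq | hxr
      · exact ⟨p, by simp, by rw [hxq, dist_comm]⟩
      · exact ⟨r, by simp, by rw [hxr, dist_self]; exact dist_nonneg⟩
  -- sum of indicator against eVec
  have hsum_ind_eVec : ∀ (α z : ℝ), (∑ x : ↥X, if z ≤ (x : ℝ) then eVec hX α x else 0)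
      = (if z ≤ ((bIdx hX : ↥X) : ℝ) then α else 0)
        + (if z ≤ ((wIdx hX : ↥X) : ℝ) then 1 - α else 0) := by
    intro α z
    have hpt : ∀ x : ↥X, (if z ≤ (x : ℝ) then eVec hX α x else 0)
        = (if x = bIdx hX then (if z ≤ ((bIdx hX : ↥X) : ℝ) then α else 0) else 0)
          + (if x = wIdx hX then (if z ≤ ((wIdx hX : ↥X) : ℝ) then 1 - α else 0) else 0) := by
      intro x
      by_cases hxb : x = bIdx hX
      · subst hxb
        rw [if_pos rfl, if_neg hbw]
        simp only [eVec, PiLp.toLp_apply, if_pos rfl, if_neg hbw]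
        split_ifs <;> ring
      · by_cases hxw : x = wIdx hX
        · subst hxw
          rw [if_neg hxb, if_pos rfl]
          simp only [eVec, PiLp.toLp_apply, if_neg hxb, if_pos rfl]
          split_ifs <;> ring
        · rw [if_neg hxb, if_neg hxw]
          simp only [eVec, PiLp.toLp_apply, if_neg hxb, if_neg hxw]
          split_ifs <;> ring
    rw [Finset.sum_congr rfl fun x _ => hpt x, Finset.sum_add_distrib,
      Finset.sum_ite_eq', Finset.sum_ite_eq']
    simp
  -- the seed: some boundary-ish two-point lottery is strictly chosen over r
  have hseed : ∃ α₀ : ℝ, r.1 (bIdx hX) < α₀ ∧ α₀ < 1 - r.1 (wIdx hX) ∧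
      r ∉ c {eL hX α₀, r} := by
    by_contra hns
    push_neg at hns
    set g : ℝ := (1 - r.1 (wIdx hX)) - r.1 (bIdx hX) with hgdef
    have hg0 : 0 < g := by rw [hgdef]; linarith
    set αs : ℕ → ℝ := fun n => (1 - r.1 (wIdx hX)) - g / 2 * (1 / ((n : ℝ) + 1)) with hαs
    have hfrac : ∀ n : ℕ, 0 < 1 / ((n : ℝ) + 1) ∧ 1 / ((n : ℝ) + 1) ≤ 1 := by
      intro n
      constructor
      · positivity
      · rw [div_le_one (by positivity)]
        have : (0 : ℝ) ≤ (n : ℝ) := Nat.cast_nonneg n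
        linarith
    have hαs1 : ∀ n, r.1 (bIdx hX) < αs n := by
      intro n
      obtain ⟨h1, h2⟩ := hfrac n
      have : g / 2 * (1 / ((n : ℝ) + 1)) ≤ g / 2 * 1 := by nlinarith
      rw [hαs]
      simp only
      nlinarith
    have hαs2 : ∀ n, αs n < 1 - r.1 (wIdx hX) := by
      intro n
      obtain ⟨h1, h2⟩ := hfrac n
      rw [hαs]
      simp only
      nlinarith
    have hα01 : ∀ n, 0 ≤ αs n ∧ αs n ≤ 1 := by
      intro n
      constructor
      · linarith [hαs1 n, hrb0]
      · linarith [hαs2 n, hrw0]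
    have hstar0 : (0 : ℝ) ≤ 1 - r.1 (wIdx hX) := by linarith
    have hstar1 : 1 - r.1 (wIdx hX) ≤ 1 := by linarith
    -- apply continuity
    have hhaus : Filter.Tendsto
        (fun n => Metric.hausdorffDist
          ((({eL hX (αs n), r} : Finset (Lot X)) : Set (Lot X)))
          ((({eL hX (1 - r.1 (wIdx hX)), r} : Finset (Lot X)) : Set (Lot X))))
        Filter.atTop (nhds 0) := by
      apply squeeze_zero (fun n => Metric.hausdorffDist_nonneg)
        (fun n => hpair (eL hX (αs n)) (eL hX (1 - r.1 (wIdx hX))))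
      have hdistb : ∀ n : ℕ, dist (eL hX (αs n)) (eL hX (1 - r.1 (wIdx hX)))
          ≤ g * (1 / ((n : ℝ) + 1)) := by
        intro n
        rw [Subtype.dist_eq, dist_eq_norm, eL_val hX (hα01 n).1 (hα01 n).2,
          eL_val hX hstar0 hstar1, eVec_sub, norm_smul, Real.norm_eq_abs]
        have habs : |αs n - (1 - r.1 (wIdx hX))| = g / 2 * (1 / ((n : ℝ) + 1)) := by
          rw [hαs]
          simp only
          rw [abs_of_nonpos (by nlinarith [(hfrac n).1])]
          ring
        rw [habs]
        have hdn : ‖degv (X := X) (bIdx hX) - degv (wIdx hX)‖ ≤ 2 := by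
          calc ‖degv (X := X) (bIdx hX) - degv (wIdx hX)‖
              ≤ ‖degv (X := X) (bIdx hX)‖ + ‖degv (X := X) (wIdx hX)‖ := norm_sub_le _ _
            _ ≤ 1 + 1 := add_le_add
                (vec_norm_le_one _ (deg (bIdx hX)).2.1 (deg (bIdx hX)).2.2)
                (vec_norm_le_one _ (deg (wIdx hX)).2.1 (deg (wIdx hX)).2.2)
            _ = 2 := by norm_num
        have h1 := (hfrac n).1
        have h2 := mul_le_mul_of_nonneg_left hdn
          (le_of_lt (by positivity : (0:ℝ) < g / 2 * (1 / ((n:ℝ) + 1))))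
        nlinarith [h2]
      apply squeeze_zero (fun n => dist_nonneg) hdistb
      have := tendsto_one_div_add_atTop_nhds_zero_nat.const_mul g
      simpa using this
    have hmem : r ∈ c {eL hX (1 - r.1 (wIdx hX)), r} := by
      apply hcont r (fun _ => r) _ (fun n => {eL hX (αs n), r})
        ⟨r, by simp⟩ (fun n => ⟨r, by simp⟩) tendsto_const_nhds hhaus
      intro n
      exact hns (αs n) (hαs1 n) (hαs2 n)
    -- but the limit lottery FOSD-dominates r
    have hne : eL hX (1 - r.1 (wIdx hX)) ≠ r := by
      intro h
      have h2 := congrArg (fun q : Lot X => q.1 m) h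
      simp only at h2
      rw [eL_val hX hstar0 hstar1] at h2
      simp only [eVec, PiLp.toLp_apply, if_neg hmb, if_neg hmw] at h2
      rw [← h2] at hρ0
      norm_num at hρ0
    have hdom : FOSDom (eL hX (1 - r.1 (wIdx hX))) r := by
      intro z hz
      have hzb : z ≤ ((bIdx hX : ↥X) : ℝ) := X.le_max' z hz
      have hval : (eL hX (1 - r.1 (wIdx hX))).1 = eVec hX (1 - r.1 (wIdx hX)) :=
        eL_val hX hstar0 hstar1
      simp only [hval]
      rw [hsum_ind_eVec]
      by_cases hzw : z ≤ ((wIdx hX : ↥X) : ℝ)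
      · rw [if_pos hzb, if_pos hzw]
        have hLHS : (∑ x : ↥X, if z ≤ (x : ℝ) then r.1 x else 0) ≤ ∑ x : ↥X, r.1 x :=
          Finset.sum_le_sum fun i _ => by
            split_ifs
            · exact le_rfl
            · exact r.2.1 i
        rw [r.2.2] at hLHS
        linarith
      · rw [if_pos hzb, if_neg hzw]
        have hLHS : (∑ x : ↥X, if z ≤ (x : ℝ) then r.1 x else 0)
            ≤ ∑ x : ↥X, if x = wIdx hX then 0 else r.1 x := by
          refine Finset.sum_le_sum fun i _ => ?_
          by_cases hiw : i = wIdx hX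
          · subst hiw
            rw [if_neg hzw, if_pos rfl]
          · rw [if_neg hiw]
            split_ifs
            · exact le_rfl
            · exact r.2.1 i
        have hRHS : (∑ x : ↥X, if x = wIdx hX then 0 else r.1 x) = 1 - r.1 (wIdx hX) := by
          have hco : ∀ i : ↥X, (if i = wIdx hX then 0 else r.1 i)
              = r.1 i - (if i = wIdx hX then r.1 i else 0) := by
            intro i; split_ifs <;> ring
          rw [Finset.sum_congr rfl fun i _ => hco i, Finset.sum_sub_distrib, r.2.2,
            Finset.sum_ite_eq']
          simp
        rw [hRHS] at hLHS
        linarith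
    exact hFOSD _ r hne hdom _ (Finset.mem_insert_self _ _) hmem
  obtain ⟨α₀, hα₀1, hα₀2, hα₀good⟩ := hseed
  have hα₀0 : 0 ≤ α₀ := le_of_lt (lt_of_le_of_lt hrb0 hα₀1)
  have hα₀le1 : α₀ ≤ 1 := by linarith
  -- openness of the strict choice of e₀ over r
  have hopen : ∃ δ : ℝ, 0 < δ ∧ ∀ p : Lot X, dist p (eL hX α₀) < δ → r ∉ c {p, r} := by
    by_contra hno
    push_neg at hno
    choose pp hp1 hp2 using fun n : ℕ => hno (1 / ((n : ℝ) + 1)) (by positivity)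
    apply hα₀good
    apply hcont r (fun _ => r) _ (fun n => {pp n, r}) ⟨r, by simp⟩ (fun n => ⟨r, by simp⟩)
      tendsto_const_nhds ?_ hp2
    apply squeeze_zero (fun n => Metric.hausdorffDist_nonneg)
      (fun n => hpair (pp n) (eL hX α₀))
    apply squeeze_zero (fun n => dist_nonneg) (fun n => (hp1 n).le)
    exact tendsto_one_div_add_atTop_nhds_zero_nat
  obtain ⟨δ, hδ0, hopen⟩ := hopen
  -- parameters
  set ε₁ := min (α₀ - r.1 (bIdx hX)) (1 - r.1 (wIdx hX) - α₀) with hε₁def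
  have hε₁0 : 0 < ε₁ := lt_min (by linarith) (by linarith)
  have hε₁a : ε₁ ≤ α₀ - r.1 (bIdx hX) := min_le_left _ _
  have hε₁b : ε₁ ≤ 1 - r.1 (wIdx hX) - α₀ := min_le_right _ _
  set δ₁ := min (ε₁ / 4) (δ / 8) with hδ₁def
  set β₀ := min (1 / 2 : ℝ) (δ / 8) with hβ₀def
  set θ := min (r.1 m / 2) (ε₁ / 4) with hθdef
  have hδ₁0 : 0 < δ₁ := lt_min (by linarith) (by linarith)
  have hβ₀0 : 0 < β₀ := lt_min (by norm_num) (by linarith)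
  have hβ₀1 : β₀ < 1 := lt_of_le_of_lt (min_le_left _ _) (by norm_num)
  have hθ0 : 0 < θ := lt_min (by linarith) (by linarith)
  have hθρ : θ ≤ r.1 m / 2 := min_le_left _ _
  have hθε : θ ≤ ε₁ / 4 := min_le_right _ _
  have hδ₁ε : δ₁ ≤ ε₁ / 4 := min_le_left _ _
  have hδ₁δ : δ₁ ≤ δ / 8 := min_le_right _ _
  have hβ₀δ : β₀ ≤ δ / 8 := min_le_right _ _
  have key1 : r.1 (bIdx hX) + θ < α₀ - δ₁ := by linarith
  have key2 : α₀ + δ₁ < 1 - r.1 (wIdx hX) - θ := by linarith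
  have key3 : 2 * β₀ + 2 * δ₁ < δ := by linarith
  -- the parametrized family
  set vf : EuclideanSpace ℝ ↥X → ℝ → EuclideanSpace ℝ ↥X := fun y α =>
    β₀ • (r.1 + θ • (y - degv m))
    + (1 - β₀) • (α • degv (bIdx hX) + (1 - α) • degv (wIdx hX)) with hvf
  have hvfco : ∀ (y : EuclideanSpace ℝ ↥X) (α : ℝ) (x : ↥X),
      vf y α x = β₀ * (r.1 x + θ * (y x - (if x = m then 1 else 0)))
        + (1 - β₀) * (α * (if x = bIdx hX then 1 else 0)
          + (1 - α) * (if x = wIdx hX then 1 else 0)) := by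
    intro y α x
    rw [hvf]
    simp only [PiLp.add_apply, PiLp.smul_apply, PiLp.sub_apply, smul_eq_mul, degv, PiLp.toLp_apply]
    all_goals ring
  have hvfsum : ∀ (y : EuclideanSpace ℝ ↥X) (α : ℝ), (∑ x, y x = 1) →
      ∑ x, vf y α x = 1 := by
    intro y α hy1
    rw [hvf]
    simp only
    simp only [sum_apply_add, sum_apply_smul, sum_apply_sub, sum_degv, PiLp.toLp_apply]
    rw [r.2.2, hy1]
    ring
  have hvfpos : ∀ (y : EuclideanSpace ℝ ↥X) (α : ℝ), (∀ x, 0 ≤ y x) → (∑ x, y x = 1) →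
      α₀ - δ₁ ≤ α → α ≤ α₀ + δ₁ → ∀ x, 0 ≤ vf y α x := by
    intro y α hy0 hy1 hα1 hα2 x
    have hα0 : 0 ≤ α := by linarith
    have hαle : α ≤ 1 := by linarith
    rw [hvfco]
    by_cases hxm : x = m
    · subst hxm
      rw [if_pos rfl, if_neg hmb, if_neg hmw]
      have hym1 : y x ≤ 1 := vec_le_one y hy0 hy1 x
      have h1 : 0 ≤ β₀ * (r.1 x + θ * (y x - 1)) := by
        apply mul_nonneg hβ₀0.le
        nlinarith [mul_nonneg hθ0.le (hy0 x)]
      nlinarith [h1]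
    · rw [if_neg hxm]
      have h2 : 0 ≤ β₀ * (r.1 x + θ * (y x - 0)) := by
        apply mul_nonneg hβ₀0.le
        nlinarith [r.2.1 x, mul_nonneg hθ0.le (hy0 x)]
      have h3 : 0 ≤ (1 - β₀) * (α * (if x = bIdx hX then 1 else 0)
          + (1 - α) * (if x = wIdx hX then 1 else 0)) := by
        apply mul_nonneg (by linarith)
        apply add_nonneg
        · apply mul_nonneg hα0; split_ifs <;> norm_num
        · apply mul_nonneg (by linarith); split_ifs <;> norm_num
      linarith
  refine ⟨{v : EuclideanSpace ℝ ↥X | ∃ y : EuclideanSpace ℝ ↥X, ∃ α : ℝ,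
      (∀ x, 0 ≤ y x) ∧ (∑ x, y x = 1) ∧ (∑ x : ↥X, y x * (x : ℝ)) = (m : ℝ) ∧
      α₀ - δ₁ ≤ α ∧ α ≤ α₀ + δ₁ ∧ v = vf y α}, ?_, ?_, ?_⟩
  · -- every element of C is strictly chosen over r and riskier than r
    rintro v ⟨y, α, hy0, hy1, hym, hα1, hα2, rfl⟩
    have hα0 : 0 ≤ α := by linarith
    have hαle : α ≤ 1 := by linarith
    have hz0 : ∀ x, 0 ≤ (r.1 + θ • (y - degv m)) x := by
      intro x
      have hco : (r.1 + θ • (y - degv m)) x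
          = r.1 x + θ * (y x - (if x = m then 1 else 0)) := by
        simp [degv, PiLp.add_apply, PiLp.smul_apply, PiLp.sub_apply, smul_eq_mul]
      rw [hco]
      by_cases hxm : x = m
      · subst hxm
        rw [if_pos rfl]
        have hym1 : y x ≤ 1 := vec_le_one y hy0 hy1 x
        nlinarith [mul_nonneg hθ0.le (hy0 x)]
      · rw [if_neg hxm]
        nlinarith [r.2.1 x, mul_nonneg hθ0.le (hy0 x)]
    have hzs : ∑ x, (r.1 + θ • (y - degv m)) x = 1 := by
      simp only [sum_apply_add, sum_apply_smul, sum_apply_sub, sum_degv, PiLp.toLp_apply]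
      rw [r.2.2, hy1]
      ring
    obtain ⟨z, hzval⟩ : ∃ z : Lot X, z.1 = r.1 + θ • (y - degv m) := ⟨⟨_, hz0, hzs⟩, rfl⟩
    obtain ⟨p, hpval⟩ : ∃ p : Lot X, p.1 = vf y α :=
      ⟨⟨_, hvfpos y α hy0 hy1 hα1 hα2, hvfsum y α hy1⟩, rfl⟩
    have hzco : ∀ x : ↥X, z.1 x = r.1 x + θ * (y x - (if x = m then 1 else 0)) := by
      intro x
      rw [hzval]
      simp only [PiLp.add_apply, PiLp.smul_apply, PiLp.sub_apply, smul_eq_mul, degv, PiLp.toLp_apply]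
    have hyb1 : y (bIdx hX) ≤ 1 := vec_le_one y hy0 hy1 _
    have hyw1 : y (wIdx hX) ≤ 1 := vec_le_one y hy0 hy1 _
    have hzb : z.1 (bIdx hX) ≤ r.1 (bIdx hX) + θ := by
      rw [hzco, if_neg (fun h => hmb h.symm)]
      nlinarith [hθ0.le]
    have hzw : z.1 (wIdx hX) ≤ r.1 (wIdx hX) + θ := by
      rw [hzco, if_neg (fun h => hmw h.symm)]
      nlinarith [hθ0.le]
    have hESpz : ES hX p z := by
      refine ⟨β₀, α, hβ₀0.le, hβ₀1, by linarith, by linarith, ?_⟩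
      rw [hpval, hzval, hvf]
    have hRrp : R r p := by
      by_cases hzr : z = r
      · have h := hrc p z (Or.inr hESpz)
        rwa [hzr] at h
      · have hmean : (∑ x : ↥X, z.1 x * (x : ℝ)) = ∑ x : ↥X, r.1 x * (x : ℝ) := by
          have hco : ∀ x : ↥X, z.1 x * (x : ℝ)
              = r.1 x * (x : ℝ) + θ * (y x * (x : ℝ)) - θ * (degv (X := X) m x * (x : ℝ)) := by
            intro x
            rw [hzco]
            simp only [degv, PiLp.toLp_apply]
            split_ifs <;> ring
          rw [Finset.sum_congr rfl fun x _ => hco x, Finset.sum_sub_distrib,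
            Finset.sum_add_distrib, ← Finset.mul_sum, ← Finset.mul_sum, sum_degv_mul, hym]
          ring
        have hcall : ∀ t : ℝ, (∑ x : ↥X, r.1 x * max (t - (x : ℝ)) 0)
            ≤ ∑ x : ↥X, z.1 x * max (t - (x : ℝ)) 0 := by
          intro t
          have hco : ∀ x : ↥X, z.1 x * max (t - (x : ℝ)) 0
              = r.1 x * max (t - (x : ℝ)) 0 + θ * (y x * max (t - (x : ℝ)) 0)
                - θ * (degv (X := X) m x * max (t - (x : ℝ)) 0) := by
            intro x
            rw [hzco]
            simp only [degv, PiLp.toLp_apply]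
            split_ifs <;> ring
          have hdm : (∑ x : ↥X, degv (X := X) m x * max (t - (x : ℝ)) 0)
              = max (t - (m : ℝ)) 0 := by
            have hco2 : ∀ x : ↥X, degv (X := X) m x * max (t - (x : ℝ)) 0
                = if x = m then max (t - (x : ℝ)) 0 else 0 := by
              intro x
              simp only [degv, PiLp.toLp_apply]
              split_ifs <;> ring
            rw [Finset.sum_congr rfl fun x _ => hco2 x, Finset.sum_ite_eq']
            simp
          rw [Finset.sum_congr rfl fun x _ => hco x, Finset.sum_sub_distrib,
            Finset.sum_add_distrib, ← Finset.mul_sum, ← Finset.mul_sum, hdm]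
          have hj := jensen_max y hy0 hy1 (m : ℝ) t hym
          nlinarith [hθ0.le]
        exact htrans r z p (hrc z r (Or.inl ⟨hzr, hmean, hcall⟩)) (hrc p z (Or.inr hESpz))
    refine ⟨p, hpval, hRrp, hopen p ?_⟩
    rw [Subtype.dist_eq, dist_eq_norm]
    have he0 : (eL hX α₀).1 = eVec hX α₀ := eL_val hX hα₀0 hα₀le1
    rw [he0]
    have hid : p.1 - eVec hX α₀ = β₀ • (z.1 - eVec hX α₀)
        + ((1 - β₀) * (α - α₀)) • (degv (bIdx hX) - degv (wIdx hX)) := by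
      rw [hpval]
      ext t
      simp only [PiLp.sub_apply, PiLp.add_apply, PiLp.smul_apply, smul_eq_mul]
      rw [hvfco, hzco]
      simp only [eVec, PiLp.toLp_apply, degv]
      split_ifs <;> ring
    rw [hid]
    have h1 : ‖β₀ • (z.1 - eVec hX α₀)‖ ≤ β₀ * 2 := by
      rw [norm_smul, Real.norm_eq_abs, abs_of_nonneg hβ₀0.le]
      have h2 : ‖z.1 - eVec hX α₀‖ ≤ 2 := by
        calc ‖z.1 - eVec hX α₀‖ ≤ ‖z.1‖ + ‖eVec hX α₀‖ := norm_sub_le _ _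
          _ ≤ 1 + 1 := add_le_add (vec_norm_le_one _ z.2.1 z.2.2)
              (vec_norm_le_one _ (fun t => eVec_nonneg hX hα₀0 hα₀le1 t) (eVec_sum hX α₀))
          _ = 2 := by norm_num
      nlinarith [hβ₀0.le]
    have h2 : ‖((1 - β₀) * (α - α₀)) • (degv (X := X) (bIdx hX) - degv (wIdx hX))‖
        ≤ δ₁ * 2 := by
      rw [norm_smul, Real.norm_eq_abs]
      have hc1 : |(1 - β₀) * (α - α₀)| ≤ δ₁ := by
        rw [abs_mul]
        have h3 : |1 - β₀| ≤ 1 := by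
          rw [abs_of_nonneg (by linarith)]
          linarith
        have h4 : |α - α₀| ≤ δ₁ := abs_le.mpr ⟨by linarith, by linarith⟩
        nlinarith [abs_nonneg (α - α₀), abs_nonneg (1 - β₀)]
      have hd : ‖degv (X := X) (bIdx hX) - degv (wIdx hX)‖ ≤ 2 := by
        calc ‖degv (X := X) (bIdx hX) - degv (wIdx hX)‖
            ≤ ‖degv (X := X) (bIdx hX)‖ + ‖degv (X := X) (wIdx hX)‖ := norm_sub_le _ _
          _ ≤ 1 + 1 := add_le_add
              (vec_norm_le_one _ (deg (bIdx hX)).2.1 (deg (bIdx hX)).2.2)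
              (vec_norm_le_one _ (deg (wIdx hX)).2.1 (deg (wIdx hX)).2.2)
          _ = 2 := by norm_num
      nlinarith [norm_nonneg (degv (X := X) (bIdx hX) - degv (wIdx hX)),
        abs_nonneg ((1 - β₀) * (α - α₀)), hδ₁0.le]
    calc ‖β₀ • (z.1 - eVec hX α₀)
          + ((1 - β₀) * (α - α₀)) • (degv (X := X) (bIdx hX) - degv (wIdx hX))‖
        ≤ ‖β₀ • (z.1 - eVec hX α₀)‖
          + ‖((1 - β₀) * (α - α₀)) • (degv (X := X) (bIdx hX) - degv (wIdx hX))‖ :=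
          norm_add_le _ _
      _ ≤ β₀ * 2 + δ₁ * 2 := add_le_add h1 h2
      _ < δ := by linarith
  · -- convexity
    rintro v ⟨y, α, hy0, hy1, hym, hα1, hα2, rfl⟩ v' ⟨y', α', hy0', hy1', hym', hα1', hα2', rfl⟩
      a b ha hb hab
    have hb' : b = 1 - a := by linarith
    subst hb'
    refine ⟨a • y + (1 - a) • y', a * α + (1 - a) * α', ?_, ?_, ?_, ?_, ?_, ?_⟩
    · intro x
      simp only [PiLp.add_apply, PiLp.smul_apply, smul_eq_mul]
      exact add_nonneg (mul_nonneg ha (hy0 x)) (mul_nonneg hb (hy0' x))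
    · rw [sum_apply_add, sum_apply_smul, sum_apply_smul, hy1, hy1']
      ring
    · have hco : ∀ x : ↥X, (a • y + (1 - a) • y') x * (x : ℝ)
          = a * (y x * (x : ℝ)) + (1 - a) * (y' x * (x : ℝ)) := by
        intro x
        simp only [PiLp.add_apply, PiLp.smul_apply, smul_eq_mul]
        ring
      rw [Finset.sum_congr rfl fun x _ => hco x, Finset.sum_add_distrib,
        ← Finset.mul_sum, ← Finset.mul_sum, hym, hym']
      ring
    · nlinarith [mul_le_mul_of_nonneg_left hα1 ha, mul_le_mul_of_nonneg_left hα1' hb]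
    · nlinarith [mul_le_mul_of_nonneg_left hα2 ha, mul_le_mul_of_nonneg_left hα2' hb]
    · ext t
      simp only [PiLp.add_apply, PiLp.smul_apply, smul_eq_mul]
      rw [hvfco, hvfco, hvfco]
      simp only [PiLp.add_apply, PiLp.smul_apply, smul_eq_mul]
      ring
  · -- full dimension
    rw [direction_affineSpan]
    have hEq : vectorSpan ℝ {v : EuclideanSpace ℝ ↥X | ∃ y : EuclideanSpace ℝ ↥X, ∃ α : ℝ,
        (∀ x, 0 ≤ y x) ∧ (∑ x, y x = 1) ∧ (∑ x : ↥X, y x * (x : ℝ)) = (m : ℝ) ∧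
        α₀ - δ₁ ≤ α ∧ α ≤ α₀ + δ₁ ∧ v = vf y α} = LinearMap.ker (sumF X) := by
      apply le_antisymm
      · rw [vectorSpan, Submodule.span_le]
        rintro u hu
        rw [Set.mem_vsub] at hu
        obtain ⟨v1, h1, v2, h2, rfl⟩ := hu
        obtain ⟨y1, a1, _, hy11, _, _, _, rfl⟩ := h1
        obtain ⟨y2, a2, _, hy21, _, _, _, rfl⟩ := h2
        simp only [SetLike.mem_coe, LinearMap.mem_ker, vsub_eq_sub, map_sub]
        show (∑ x, vf y1 a1 x) - (∑ x, vf y2 a2 x) = 0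
        rw [hvfsum y1 a1 hy11, hvfsum y2 a2 hy21]
        ring
      · -- the kernel is spanned by differences in C
        obtain ⟨lam, hlam⟩ : ∃ l : ℝ,
            l = ((m : ℝ) - (wIdx hX : ℝ)) / ((bIdx hX : ℝ) - (wIdx hX : ℝ)) := ⟨_, rfl⟩
        have hbw0 : (0 : ℝ) < (bIdx hX : ℝ) - (wIdx hX : ℝ) := by linarith
        have hlam0 : 0 < lam := by
          rw [hlam]
          apply div_pos (by linarith) hbw0
        have hlam1 : lam < 1 := by
          rw [hlam, div_lt_one hbw0]
          linarith
        have hyhat0 : ∀ x, 0 ≤ eVec hX lam x := fun x => eVec_nonneg hX hlam0.le hlam1.le x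
        have hyhat1 : ∑ x, eVec hX lam x = 1 := eVec_sum hX lam
        have hyhatm : (∑ x : ↥X, eVec hX lam x * (x : ℝ)) = (m : ℝ) := by
          have hco : ∀ x : ↥X, eVec hX lam x * (x : ℝ)
              = (if x = bIdx hX then lam * (x : ℝ) else 0)
                + (if x = wIdx hX then (1 - lam) * (x : ℝ) else 0) := by
            intro x
            simp only [eVec, PiLp.toLp_apply]
            by_cases hxb : x = bIdx hX
            · subst hxb
              rw [if_pos rfl, if_pos rfl, if_neg hbw, if_neg hbw]
              ring
            · by_cases hxw : x = wIdx hX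
              · subst hxw
                rw [if_neg hxb, if_neg hxb, if_pos rfl, if_pos rfl]
                ring
              · rw [if_neg hxb, if_neg hxb, if_neg hxw, if_neg hxw]
                ring
          rw [Finset.sum_congr rfl fun x _ => hco x, Finset.sum_add_distrib,
            Finset.sum_ite_eq', Finset.sum_ite_eq']
          simp only [Finset.mem_univ, if_pos]
          rw [hlam]
          field_simp
          ring
        have hmemhat : ∀ α : ℝ, α₀ - δ₁ ≤ α → α ≤ α₀ + δ₁ →
            vf (eVec hX lam) α ∈ {v : EuclideanSpace ℝ ↥X | ∃ y : EuclideanSpace ℝ ↥X,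
              ∃ α : ℝ, (∀ x, 0 ≤ y x) ∧ (∑ x, y x = 1) ∧
              (∑ x : ↥X, y x * (x : ℝ)) = (m : ℝ) ∧
              α₀ - δ₁ ≤ α ∧ α ≤ α₀ + δ₁ ∧ v = vf y α} :=
          fun α h1 h2 => ⟨eVec hX lam, α, hyhat0, hyhat1, hyhatm, h1, h2, rfl⟩
        -- the vector d = δ_b - δ_w lies in the vector span
        have hdv : (degv (bIdx hX) - degv (wIdx hX) : EuclideanSpace ℝ ↥X) ∈
            vectorSpan ℝ {v : EuclideanSpace ℝ ↥X | ∃ y : EuclideanSpace ℝ ↥X, ∃ α : ℝ,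
              (∀ x, 0 ≤ y x) ∧ (∑ x, y x = 1) ∧ (∑ x : ↥X, y x * (x : ℝ)) = (m : ℝ) ∧
              α₀ - δ₁ ≤ α ∧ α ≤ α₀ + δ₁ ∧ v = vf y α} := by
          have hm1 := hmemhat (α₀ + δ₁) (by linarith) le_rfl
          have hm2 := hmemhat (α₀ - δ₁) le_rfl (by linarith)
          have hsub := vsub_mem_vectorSpan ℝ hm1 hm2
          have hveq : vf (eVec hX lam) (α₀ + δ₁) -ᵥ vf (eVec hX lam) (α₀ - δ₁)
              = ((1 - β₀) * (2 * δ₁)) • (degv (bIdx hX) - degv (wIdx hX)) := by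
            show vf (eVec hX lam) (α₀ + δ₁) - vf (eVec hX lam) (α₀ - δ₁) = _
            ext t
            simp only [PiLp.sub_apply, PiLp.smul_apply, smul_eq_mul]
            rw [hvfco, hvfco]
            simp only [degv, PiLp.toLp_apply]
            split_ifs <;> ring
          rw [hveq] at hsub
          have hcne : ((1 - β₀) * (2 * δ₁)) ≠ 0 := by
            have : 0 < (1 - β₀) * (2 * δ₁) := by nlinarith
            exact this.ne'
          have := Submodule.smul_mem _ ((1 - β₀) * (2 * δ₁))⁻¹ hsub
          rwa [smul_smul, inv_mul_cancel₀ hcne, one_smul] at this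
        have key : ∀ x : ↥X, x ≠ wIdx hX →
            (degv x - degv (wIdx hX) : EuclideanSpace ℝ ↥X) ∈
            vectorSpan ℝ {v : EuclideanSpace ℝ ↥X | ∃ y : EuclideanSpace ℝ ↥X, ∃ α : ℝ,
              (∀ x, 0 ≤ y x) ∧ (∑ x, y x = 1) ∧ (∑ x : ↥X, y x * (x : ℝ)) = (m : ℝ) ∧
              α₀ - δ₁ ≤ α ∧ α ≤ α₀ + δ₁ ∧ v = vf y α} := by
          intro x hxw
          by_cases hxb : x = bIdx hX
          · subst hxb
            exact hdv
          · -- x is an interior prize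
            have hwx : (wIdx hX : ℝ) < (x : ℝ) :=
              lt_of_le_of_ne (X.min'_le _ x.2) (fun h => hxw (Subtype.ext h.symm))
            have hxbR : (x : ℝ) < (bIdx hX : ℝ) :=
              lt_of_le_of_ne (X.le_max' _ x.2) (fun h => hxb (Subtype.ext h))
            obtain ⟨σ, hσdef⟩ : ∃ s : ℝ, s = (1 / 2) *
                min (((m : ℝ) - (wIdx hX : ℝ)) / ((x : ℝ) - (wIdx hX : ℝ)))
                  (((bIdx hX : ℝ) - (m : ℝ)) / ((bIdx hX : ℝ) - (x : ℝ))) := ⟨_, rfl⟩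
            have hσ0 : 0 < σ := by
              rw [hσdef]
              have d1 : 0 < ((m : ℝ) - (wIdx hX : ℝ)) / ((x : ℝ) - (wIdx hX : ℝ)) :=
                div_pos (by linarith) (by linarith)
              have d2 : 0 < ((bIdx hX : ℝ) - (m : ℝ)) / ((bIdx hX : ℝ) - (x : ℝ)) :=
                div_pos (by linarith) (by linarith)
              have := lt_min d1 d2
              nlinarith [this]
            obtain ⟨μ, hμdef⟩ : ∃ u : ℝ, u = ((m : ℝ) - (wIdx hX : ℝ)
                - σ * ((x : ℝ) - (wIdx hX : ℝ))) / ((bIdx hX : ℝ) - (wIdx hX : ℝ)) := ⟨_, rfl⟩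
            have hσx : σ * ((x : ℝ) - (wIdx hX : ℝ)) ≤ ((m : ℝ) - (wIdx hX : ℝ)) / 2 := by
              have h5 : σ ≤ (1 / 2) * (((m : ℝ) - (wIdx hX : ℝ)) / ((x : ℝ) - (wIdx hX : ℝ))) := by
                rw [hσdef]
                nlinarith [min_le_left (((m : ℝ) - (wIdx hX : ℝ)) / ((x : ℝ) - (wIdx hX : ℝ)))
                  (((bIdx hX : ℝ) - (m : ℝ)) / ((bIdx hX : ℝ) - (x : ℝ)))]
              have h6 : σ * ((x : ℝ) - (wIdx hX : ℝ))
                  ≤ (1 / 2) * (((m : ℝ) - (wIdx hX : ℝ)) / ((x : ℝ) - (wIdx hX : ℝ)))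
                    * ((x : ℝ) - (wIdx hX : ℝ)) := by
                nlinarith [h5]
              have h7 : (((m : ℝ) - (wIdx hX : ℝ)) / ((x : ℝ) - (wIdx hX : ℝ)))
                  * ((x : ℝ) - (wIdx hX : ℝ)) = (m : ℝ) - (wIdx hX : ℝ) :=
                div_mul_cancel₀ _ (by linarith)
              nlinarith [h6, h7]
            have hσxb : σ * ((bIdx hX : ℝ) - (x : ℝ)) ≤ ((bIdx hX : ℝ) - (m : ℝ)) / 2 := by
              have h5 : σ ≤ (1 / 2) * (((bIdx hX : ℝ) - (m : ℝ)) / ((bIdx hX : ℝ) - (x : ℝ))) := by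
                rw [hσdef]
                nlinarith [min_le_right (((m : ℝ) - (wIdx hX : ℝ)) / ((x : ℝ) - (wIdx hX : ℝ)))
                  (((bIdx hX : ℝ) - (m : ℝ)) / ((bIdx hX : ℝ) - (x : ℝ)))]
              have h6 : σ * ((bIdx hX : ℝ) - (x : ℝ))
                  ≤ (1 / 2) * (((bIdx hX : ℝ) - (m : ℝ)) / ((bIdx hX : ℝ) - (x : ℝ)))
                    * ((bIdx hX : ℝ) - (x : ℝ)) := by
                nlinarith [h5]
              have h7 : (((bIdx hX : ℝ) - (m : ℝ)) / ((bIdx hX : ℝ) - (x : ℝ)))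
                  * ((bIdx hX : ℝ) - (x : ℝ)) = (bIdx hX : ℝ) - (m : ℝ) :=
                div_mul_cancel₀ _ (by linarith)
              nlinarith [h6, h7]
            have hμ0 : 0 ≤ μ := by
              rw [hμdef]
              apply div_nonneg _ (by linarith)
              linarith
            have hν0 : 0 ≤ 1 - σ - μ := by
              have hμval : μ * ((bIdx hX : ℝ) - (wIdx hX : ℝ))
                  = (m : ℝ) - (wIdx hX : ℝ) - σ * ((x : ℝ) - (wIdx hX : ℝ)) := by
                rw [hμdef]
                field_simp
              nlinarith [hμval, hσxb, hbw0]
            -- the lottery q_x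
            obtain ⟨qx, hqx⟩ : ∃ q : EuclideanSpace ℝ ↥X,
                q = σ • degv x + μ • degv (bIdx hX) + (1 - σ - μ) • degv (wIdx hX) := ⟨_, rfl⟩
            have hqxco : ∀ t : ↥X, qx t = σ * (if t = x then 1 else 0)
                + μ * (if t = bIdx hX then 1 else 0)
                + (1 - σ - μ) * (if t = wIdx hX then 1 else 0) := by
              intro t
              rw [hqx]
              simp [degv, PiLp.add_apply, PiLp.smul_apply, smul_eq_mul]
            have hqx0 : ∀ t, 0 ≤ qx t := by
              intro t
              rw [hqxco]
              apply add_nonneg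
              apply add_nonneg
              · apply mul_nonneg hσ0.le; split_ifs <;> norm_num
              · apply mul_nonneg hμ0; split_ifs <;> norm_num
              · apply mul_nonneg hν0; split_ifs <;> norm_num
            have hqx1 : ∑ t, qx t = 1 := by
              rw [hqx]
              simp only [sum_apply_add, sum_apply_smul, sum_degv, PiLp.toLp_apply]
              ring
            have hqxm : (∑ t : ↥X, qx t * (t : ℝ)) = (m : ℝ) := by
              have hco : ∀ t : ↥X, qx t * (t : ℝ)
                  = σ * (degv (X := X) x t * (t : ℝ)) + μ * (degv (X := X) (bIdx hX) t * (t : ℝ))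
                    + (1 - σ - μ) * (degv (X := X) (wIdx hX) t * (t : ℝ)) := by
                intro t
                rw [hqxco]
                simp only [degv, PiLp.toLp_apply]
                split_ifs <;> ring
              rw [Finset.sum_congr rfl fun t _ => hco t, Finset.sum_add_distrib,
                Finset.sum_add_distrib, ← Finset.mul_sum, ← Finset.mul_sum, ← Finset.mul_sum,
                sum_degv_mul, sum_degv_mul, sum_degv_mul]
              have hμval : μ * ((bIdx hX : ℝ) - (wIdx hX : ℝ))
                  = (m : ℝ) - (wIdx hX : ℝ) - σ * ((x : ℝ) - (wIdx hX : ℝ)) := by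
                rw [hμdef]
                field_simp
              nlinarith [hμval]
            have hm1 : vf qx α₀ ∈ {v : EuclideanSpace ℝ ↥X | ∃ y : EuclideanSpace ℝ ↥X,
                ∃ α : ℝ, (∀ x, 0 ≤ y x) ∧ (∑ x, y x = 1) ∧
                (∑ x : ↥X, y x * (x : ℝ)) = (m : ℝ) ∧
                α₀ - δ₁ ≤ α ∧ α ≤ α₀ + δ₁ ∧ v = vf y α} :=
              ⟨qx, α₀, hqx0, hqx1, hqxm, by linarith, by linarith, rfl⟩
            have hm2 := hmemhat α₀ (by linarith) (by linarith)
            have hsub := vsub_mem_vectorSpan ℝ hm1 hm2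
            have hveq : vf qx α₀ -ᵥ vf (eVec hX lam) α₀
                = (β₀ * θ) • (σ • (degv x - degv (wIdx hX))
                  + (μ - lam) • (degv (bIdx hX) - degv (wIdx hX))) := by
              show vf qx α₀ - vf (eVec hX lam) α₀ = _
              ext t
              simp only [PiLp.sub_apply, PiLp.add_apply, PiLp.smul_apply, smul_eq_mul]
              rw [hvfco, hvfco, hqxco]
              simp only [eVec, PiLp.toLp_apply, degv]
              split_ifs <;> ring
            rw [hveq] at hsub
            have hbθ : (β₀ * θ) ≠ 0 := by positivity
            have hsub2 := Submodule.smul_mem _ (β₀ * θ)⁻¹ hsub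
            rw [smul_smul, inv_mul_cancel₀ hbθ, one_smul] at hsub2
            have hfin : (degv x - degv (wIdx hX) : EuclideanSpace ℝ ↥X)
                = σ⁻¹ • ((σ • (degv x - degv (wIdx hX))
                  + (μ - lam) • (degv (bIdx hX) - degv (wIdx hX)))
                  - (μ - lam) • (degv (bIdx hX) - degv (wIdx hX))) := by
              rw [add_sub_cancel_right, smul_smul, inv_mul_cancel₀ hσ0.ne', one_smul]
            rw [hfin]
            exact Submodule.smul_mem _ _ (Submodule.sub_mem _ hsub2
              (Submodule.smul_mem _ _ hdv))
        intro u hu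
        have hu0 : ∑ x, u x = 0 := LinearMap.mem_ker.mp hu
        have hrep : u = ∑ x ∈ Finset.univ.erase (wIdx hX),
            (u x) • (degv x - degv (wIdx hX) : EuclideanSpace ℝ ↥X) := by
          ext t
          rw [sum_coord]
          have hco : ∀ x : ↥X, ((u x) • (degv x - degv (wIdx hX) : EuclideanSpace ℝ ↥X)) t
              = (if t = x then u x else 0) - (if t = wIdx hX then u x else 0) := by
            intro x
            simp only [PiLp.smul_apply, PiLp.sub_apply, smul_eq_mul, degv, PiLp.toLp_apply]
            split_ifs <;> ring
          rw [Finset.sum_congr rfl fun x _ => hco x, Finset.sum_sub_distrib]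
          by_cases ht : t = wIdx hX
          · have hs1 : (∑ x ∈ Finset.univ.erase (wIdx hX), if t = x then u x else 0) = 0 := by
              apply Finset.sum_eq_zero
              intro x hx
              exact if_neg (fun h => (Finset.ne_of_mem_erase hx) (by rw [← h, ht]))
            have hs2 : (∑ x ∈ Finset.univ.erase (wIdx hX), if t = wIdx hX then u x else 0)
                = ∑ x ∈ Finset.univ.erase (wIdx hX), u x := by
              apply Finset.sum_congr rfl
              intro x _
              rw [if_pos ht]
            have hs3 : (∑ x ∈ Finset.univ.erase (wIdx hX), u x) + u (wIdx hX) = 0 := by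
              rw [Finset.sum_erase_add _ _ (Finset.mem_univ (wIdx hX))]
              exact hu0
            rw [hs1, hs2, ht]
            linarith
          · have hs1 : (∑ x ∈ Finset.univ.erase (wIdx hX), if t = x then u x else 0) = u t := by
              rw [Finset.sum_ite_eq]
              rw [if_pos (Finset.mem_erase.mpr ⟨ht, Finset.mem_univ t⟩)]
            have hs2 : (∑ x ∈ Finset.univ.erase (wIdx hX), if t = wIdx hX then u x else 0)
                = 0 := by
              apply Finset.sum_eq_zero
              intro x _
              rw [if_neg ht]
            rw [hs1, hs2]
            ring
        rw [hrep]
        exact Submodule.sum_mem _ fun x hx =>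
          Submodule.smul_mem _ _ (key x (Finset.ne_of_mem_erase hx))
    rw [hEq]
    exact finrank_ker_sumF X hX

end
end

section
/- Suppose a choice correspondence c over finite nonempty sets of lotteries admits an AREU representation (R, {u_p}) in which every utility is normalized so that u_p(w) = 0 and u_p(b) = 1, and suppose c satisfies Transitivity over 𝒜. Then u_{p₁} = u_{p₂} for all p₁, p₂ ∈ Δ(X) \ Δ({b,w}). -/
open scoped BigOperators

noncomputable section

variable {X : Finset ℝ}

/-- `c` satisfies Transitivity over a collection `S` of choice problems. -/
def TransOver (c : Finset (Lot X) → Finset (Lot X)) (S : Set (Finset (Lot X))) : Prop :=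
  ∀ p q s : Lot X,
    ({p, q} : Finset (Lot X)) ∈ S → ({q, s} : Finset (Lot X)) ∈ S →
    ({p, s} : Finset (Lot X)) ∈ S →
    p ∈ c {p, q} → q ∈ c {q, s} → p ∈ c {p, s}

namespace AREUaux

open Filter Set

variable {X : Finset ℝ}

/-- clamp to `[0,1]`. -/
def cl (a : ℝ) : ℝ := max 0 (min 1 a)

lemma cl_nonneg (a : ℝ) : 0 ≤ cl a := le_max_left _ _
lemma cl_le_one (a : ℝ) : cl a ≤ 1 := max_le zero_le_one (min_le_left _ _)
lemma cl_eq {a : ℝ} (h0 : 0 ≤ a) (h1 : a ≤ 1) : cl a = a := by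
  unfold cl; rw [min_eq_right h1, max_eq_right h0]
lemma cl_cont : Continuous cl :=
  continuous_const.max (continuous_const.min continuous_id)

lemma lot_nonneg (p : Lot X) (x : ↥X) : 0 ≤ p.1 x := p.2.1 x
lemma lot_sum (p : Lot X) : ∑ x, p.1 x = 1 := p.2.2
lemma lot_le_one (p : Lot X) (x : ↥X) : p.1 x ≤ 1 := by
  calc p.1 x ≤ ∑ x, p.1 x :=
        Finset.single_le_sum (fun i _ => lot_nonneg p i) (Finset.mem_univ x)
  _ = 1 := lot_sum p

lemma lot_triple_le_one (p : Lot X) {x y z : ↥X} (hxy : x ≠ y) (hxz : x ≠ z) (hyz : y ≠ z) :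
    p.1 x + p.1 y + p.1 z ≤ 1 := by
  have hsum := lot_sum p
  have hsub : ∑ w ∈ ({x, y, z} : Finset ↥X), p.1 w ≤ ∑ w, p.1 w :=
    Finset.sum_le_sum_of_subset_of_nonneg (Finset.subset_univ _)
      (fun i _ _ => lot_nonneg p i)
  rw [Finset.sum_insert (by simp [hxy, hxz]), Finset.sum_pair hyz] at hsub
  linarith

lemma add_smul_apply (a b : ℝ) (v w : EuclideanSpace ℝ ↥X) (x : ↥X) :
    (a • v + b • w) x = a * v x + b * w x := by
  simp [PiLp.add_apply, PiLp.smul_apply, smul_eq_mul]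

/-- clamped mixture of two lotteries (a lottery for every real `β`). -/
def mixL (β : ℝ) (p q : Lot X) : Lot X :=
  ⟨cl β • p.1 + (1 - cl β) • q.1, by
    intro x
    have h0 := cl_nonneg β; have h1 := cl_le_one β
    have hp := lot_nonneg p x; have hq := lot_nonneg q x
    rw [add_smul_apply]
    nlinarith, by
    rw [Finset.sum_congr rfl (fun x _ => add_smul_apply (cl β) (1 - cl β) p.1 q.1 x),
      Finset.sum_add_distrib, ← Finset.mul_sum, ← Finset.mul_sum, lot_sum, lot_sum]
    ring⟩

lemma mixL_apply (β : ℝ) (p q : Lot X) (x : ↥X) :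
    (mixL β p q).1 x = cl β * p.1 x + (1 - cl β) * q.1 x :=
  add_smul_apply _ _ _ _ x

lemma EV_mix (β : ℝ) (p q : Lot X) (f : ↥X → ℝ) :
    EV (mixL β p q) f = cl β * EV p f + (1 - cl β) * EV q f := by
  unfold EV
  rw [Finset.sum_congr rfl (fun x _ => by rw [mixL_apply]; ring :
    ∀ x ∈ Finset.univ, (mixL β p q).1 x * f x
      = cl β * (p.1 x * f x) + (1 - cl β) * (q.1 x * f x)),
    Finset.sum_add_distrib, ← Finset.mul_sum, ← Finset.mul_sum]

lemma EV_deg (a : ↥X) (f : ↥X → ℝ) : EV (deg a) f = f a := by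
  unfold EV deg degv
  simp [ite_mul, Finset.sum_ite_eq']

lemma EV_nonneg (q : Lot X) (f : ↥X → ℝ) (hf : ∀ x, 0 ≤ f x) : 0 ≤ EV q f :=
  Finset.sum_nonneg fun x _ => mul_nonneg (lot_nonneg q x) (hf x)

lemma EV_le_one (q : Lot X) (f : ↥X → ℝ) (hf1 : ∀ x, f x ≤ 1) : EV q f ≤ 1 := by
  calc EV q f ≤ ∑ x, q.1 x := Finset.sum_le_sum (fun x _ => by
        have := lot_nonneg q x; nlinarith [hf1 x])
  _ = 1 := lot_sum q

/-- Bundled context for the whole proof. -/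
structure Ctx (X : Finset ℝ) where
  hX : X.Nonempty
  hcard : 2 ≤ X.card
  c : Finset (Lot X) → Finset (Lot X)
  R : Lot X → Lot X → Prop
  u : Lot X → ↥X → ℝ
  r : Finset (Lot X) → Lot X
  hrep : IsAREU hX c R u r
  hnorm : ∀ p : Lot X, u p (wIdx hX) = 0 ∧ u p (bIdx hX) = 1
  htrans : TransOver c {A : Finset (Lot X) | A.Nonempty}

namespace Ctx

variable (C : Ctx X)

def bI : ↥X := bIdx C.hX
def wI : ↥X := wIdx C.hX
def m (α : ℝ) : Lot X := mixL α (deg C.bI) (deg C.wI)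
def ev (q : Lot X) : ℝ := EV q (C.u q)

lemma hlin : IsLinearOrder (Lot X) C.R := C.hrep.1
lemma hrc : RiskConsistent C.hX C.R := C.hrep.2.1
lemma humono : ∀ p : Lot X, ∀ x y : ↥X, (x : ℝ) < (y : ℝ) → C.u p x < C.u p y :=
  C.hrep.2.2.1
lemma u_mem (p : Lot X) (x : ↥X) : C.u p x ∈ Set.Icc (0:ℝ) 1 := C.hrep.2.2.2.1 p x
lemma hrmax : ∀ A : Finset (Lot X), A.Nonempty → C.r A ∈ A ∧ ∀ p ∈ A, C.R (C.r A) p :=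
  C.hrep.2.2.2.2.1
lemma hcmem : ∀ A : Finset (Lot X), A.Nonempty → ∀ p : Lot X,
    p ∈ C.c A ↔ p ∈ A ∧ ∀ q ∈ A, EV q (C.u (C.r A)) ≤ EV p (C.u (C.r A)) :=
  C.hrep.2.2.2.2.2.1
lemma hconc : ∀ p q : Lot X, C.R q p → ∃ f : ℝ → ℝ, ConcaveOn ℝ (Set.Icc 0 1) f ∧
    (∀ t ∈ Set.Icc (0:ℝ) 1, f t ∈ Set.Icc (0:ℝ) 1) ∧ ∀ x : ↥X, C.u q x = f (C.u p x) :=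
  C.hrep.2.2.2.2.2.2.1
lemma hclosed : ClosedGraphC C.c := C.hrep.2.2.2.2.2.2.2

lemma Rrefl (a : Lot X) : C.R a a := C.hlin.toIsPartialOrder.toIsPreorder.toRefl.refl a
lemma Rtrans {a b d : Lot X} (h1 : C.R a b) (h2 : C.R b d) : C.R a d :=
  C.hlin.toIsPartialOrder.toIsPreorder.toIsTrans.trans _ _ _ h1 h2
lemma Rantisymm {a b : Lot X} (h1 : C.R a b) (h2 : C.R b a) : a = b :=
  C.hlin.toIsPartialOrder.toAntisymm.antisymm _ _ h1 h2
lemma Rtotal (a b : Lot X) : C.R a b ∨ C.R b a := C.hlin.toTotal.total a b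

lemma w_lt_b : ((C.wI : ℝ)) < ((C.bI : ℝ)) :=
  X.min'_lt_max'_of_card (lt_of_lt_of_le one_lt_two C.hcard)

lemma bI_ne_wI : C.bI ≠ C.wI := fun h =>
  absurd (congrArg (fun t : ↥X => (t : ℝ)) h) (ne_of_gt C.w_lt_b)

lemma coe_lt_b {x : ↥X} (h : x ≠ C.bI) : (x : ℝ) < (C.bI : ℝ) :=
  lt_of_le_of_ne (X.le_max' _ x.2) (fun hv => h (Subtype.ext hv))
lemma w_lt_coe {x : ↥X} (h : x ≠ C.wI) : ((C.wI : ℝ)) < (x : ℝ) :=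
  lt_of_le_of_ne (X.min'_le _ x.2) (fun hv => h (Subtype.ext hv.symm))
lemma w_le_coe (x : ↥X) : ((C.wI : ℝ)) ≤ (x : ℝ) := X.min'_le _ x.2
lemma coe_le_b (x : ↥X) : (x : ℝ) ≤ ((C.bI : ℝ)) := X.le_max' _ x.2

lemma u_w (p : Lot X) : C.u p C.wI = 0 := (C.hnorm p).1
lemma u_b (p : Lot X) : C.u p C.bI = 1 := (C.hnorm p).2
lemma u_lt_one {p : Lot X} {x : ↥X} (h : x ≠ C.bI) : C.u p x < 1 := by
  have := C.humono p x C.bI (C.coe_lt_b h); rwa [C.u_b] at this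
lemma u_pos {p : Lot X} {x : ↥X} (h : x ≠ C.wI) : 0 < C.u p x := by
  have := C.humono p C.wI x (C.w_lt_coe h); rwa [C.u_w] at this

lemma EV_m (α : ℝ) (f : ↥X → ℝ) :
    EV (C.m α) f = cl α * f C.bI + (1 - cl α) * f C.wI := by
  unfold m; rw [EV_mix, EV_deg, EV_deg]
lemma EV_m_u (α : ℝ) (p : Lot X) : EV (C.m α) (C.u p) = cl α := by
  rw [C.EV_m, C.u_b, C.u_w]; ring

lemma m_val {α : ℝ} (h0 : 0 ≤ α) (h1 : α ≤ 1) :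
    (C.m α).1 = α • degv C.bI + (1 - α) • degv C.wI := by
  show cl α • (degv C.bI) + (1 - cl α) • (degv C.wI) = _
  rw [cl_eq h0 h1]

lemma deg_apply (a x : ↥X) : (deg a).1 x = if x = a then 1 else 0 := rfl

lemma m_apply_b (α : ℝ) : (C.m α).1 C.bI = cl α := by
  unfold m; rw [mixL_apply, deg_apply, deg_apply, if_pos rfl, if_neg C.bI_ne_wI]; ring
lemma m_apply_w (α : ℝ) : (C.m α).1 C.wI = 1 - cl α := by
  unfold m
  rw [mixL_apply, deg_apply, deg_apply, if_pos rfl, if_neg (Ne.symm C.bI_ne_wI)]; ring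
lemma m_apply {α : ℝ} {x : ↥X} (hb : x ≠ C.bI) (hw : x ≠ C.wI) : (C.m α).1 x = 0 := by
  unfold m; rw [mixL_apply, deg_apply, deg_apply, if_neg hb, if_neg hw]; ring

lemma inBW_m (α : ℝ) : inBW C.hX (C.m α) := by
  intro x hb hw
  exact C.m_apply hb hw

lemma not_inBW_witness {q : Lot X} (h : ¬ inBW C.hX q) :
    ∃ y : ↥X, y ≠ C.bI ∧ y ≠ C.wI ∧ 0 < q.1 y := by
  unfold inBW at h; push_neg at h
  obtain ⟨y, hb, hw, hnz⟩ := h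
  exact ⟨y, hb, hw, lt_of_le_of_ne (lot_nonneg q y) (Ne.symm hnz)⟩

lemma ev_mem (q : Lot X) : C.ev q ∈ Set.Icc (0:ℝ) 1 :=
  ⟨EV_nonneg q _ (fun x => (C.u_mem q x).1), EV_le_one q _ (fun x => (C.u_mem q x).2)⟩

lemma EV_bounds (q : Lot X) (p : Lot X) {y : ↥X} (hyb : y ≠ C.bI) (hyw : y ≠ C.wI)
    (hy : 0 < q.1 y) :
    q.1 C.bI < EV q (C.u p) ∧ EV q (C.u p) < 1 - q.1 C.wI := by
  have hby : C.bI ≠ y := fun h => hyb h.symm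
  have hwy : C.wI ≠ y := fun h => hyw h.symm
  constructor
  · have hle : ∑ x ∈ ({C.bI, y} : Finset ↥X), q.1 x * C.u p x ≤ EV q (C.u p) :=
      Finset.sum_le_sum_of_subset_of_nonneg (Finset.subset_univ _)
        (fun i _ _ => mul_nonneg (lot_nonneg q i) (C.u_mem p i).1)
    rw [Finset.sum_pair hby, C.u_b] at hle
    have h1 : 0 < q.1 y * C.u p y := mul_pos hy (C.u_pos hyw)
    nlinarith
  · have key : EV q (C.u p) + (∑ x, q.1 x * (1 - C.u p x)) = 1 := by
      unfold EV
      rw [← Finset.sum_add_distrib,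
        Finset.sum_congr rfl (fun x _ => by ring :
          ∀ x ∈ Finset.univ, q.1 x * C.u p x + q.1 x * (1 - C.u p x) = q.1 x),
        lot_sum]
    have hle : ∑ x ∈ ({C.wI, y} : Finset ↥X), q.1 x * (1 - C.u p x)
        ≤ ∑ x, q.1 x * (1 - C.u p x) :=
      Finset.sum_le_sum_of_subset_of_nonneg (Finset.subset_univ _)
        (fun i _ _ => mul_nonneg (lot_nonneg q i) (by linarith [(C.u_mem p i).2]))
    rw [Finset.sum_pair hwy, C.u_w] at hle
    have h1 : 0 < q.1 y * (1 - C.u p y) := mul_pos hy (by linarith [C.u_lt_one (p := p) hyb])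
    nlinarith

lemma u_le_u {a b : Lot X} (h : C.R a b) (x : ↥X) : C.u b x ≤ C.u a x := by
  obtain ⟨f, hfconc, _, heq⟩ := C.hconc b a h
  have hf0 : f 0 = 0 := by have h0 := heq C.wI; rw [C.u_w, C.u_w] at h0; exact h0.symm
  have hf1 : f 1 = 1 := by have h1 := heq C.bI; rw [C.u_b, C.u_b] at h1; exact h1.symm
  have ht := C.u_mem b x
  have hkey := hfconc.2 (Set.left_mem_Icc.2 zero_le_one) (Set.right_mem_Icc.2 zero_le_one)
    (by linarith [ht.2] : (0:ℝ) ≤ 1 - C.u b x) ht.1 (by ring)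
  simp only [smul_eq_mul, hf0, hf1, mul_zero, mul_one, add_zero, zero_add] at hkey
  rw [heq x]
  -- hkey : (1 - u b x) * 0 + u b x * 1 ≤ f ((1 - u b x) * 0 + u b x * 1) roughly
  calc C.u b x = f (C.u b x) - (f (C.u b x) - C.u b x) := by ring
  _ ≤ f (C.u b x) := by nlinarith [hkey]

lemma R_spread {q : Lot X} {β α : ℝ} (hβ0 : 0 ≤ β) (hβ1 : β < 1)
    (h1 : q.1 C.bI < α) (h2 : α < 1 - q.1 C.wI) : C.R q (mixL β q (C.m α)) := by
  apply C.hrc _ q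
  right
  have hα0 : 0 ≤ α := le_trans (lot_nonneg q C.bI) h1.le
  have hα1 : α ≤ 1 := by have := lot_nonneg q C.wI; linarith
  refine ⟨β, α, hβ0, hβ1, h1, h2, ?_⟩
  show cl β • q.1 + (1 - cl β) • (C.m α).1 = _
  rw [cl_eq hβ0 hβ1.le, C.m_val hα0 hα1]
  rfl

end Ctx

lemma pair_nonempty (p q : Lot X) : ({p, q} : Finset (Lot X)).Nonempty := ⟨p, by simp⟩

variable (C : Ctx X)
namespace Ctx

lemma c_pair_left (p q : Lot X) :
    p ∈ C.c {p, q} ↔ EV q (C.u (C.r {p, q})) ≤ EV p (C.u (C.r {p, q})) := by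
  rw [C.hcmem _ (pair_nonempty p q) p]
  constructor
  · rintro ⟨-, hall⟩; exact hall q (by simp)
  · intro h
    refine ⟨by simp, fun s hs => ?_⟩
    rcases Finset.mem_insert.mp hs with rfl | hs
    · exact le_refl _
    · rw [Finset.mem_singleton.mp hs]; exact h

lemma c_pair_right (p q : Lot X) :
    q ∈ C.c {p, q} ↔ EV p (C.u (C.r {p, q})) ≤ EV q (C.u (C.r {p, q})) := by
  rw [C.hcmem _ (pair_nonempty p q) q]
  constructor
  · rintro ⟨-, hall⟩; exact hall p (by simp)
  · intro h
    refine ⟨by simp, fun s hs => ?_⟩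
    rcases Finset.mem_insert.mp hs with rfl | hs
    · exact h
    · rw [Finset.mem_singleton.mp hs]

lemma r_pair {p q : Lot X} (h : C.R p q) : C.r {p, q} = p := by
  obtain ⟨hmem, hall⟩ := C.hrmax _ (pair_nonempty p q)
  rcases Finset.mem_insert.mp hmem with h1 | h1
  · exact h1
  · rw [Finset.mem_singleton] at h1
    have h2 := hall p (by simp)
    rw [h1] at h2
    rw [h1]
    exact C.Rantisymm h2 h

lemma B1 {q : Lot X} {y : ↥X} (hyb : y ≠ C.bI) (hyw : y ≠ C.wI) (hy : 0 < q.1 y)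
    {α : ℝ} (h0 : 0 ≤ α) (h1 : α ≤ 1) :
    (q ∈ C.c {q, C.m α} ↔ α ≤ C.ev q) ∧ (C.m α ∈ C.c {q, C.m α} ↔ C.ev q ≤ α) := by
  have hqm : q ≠ C.m α := by
    intro h
    have h2 : q.1 y = 0 := by rw [h]; exact C.inBW_m α y hyb hyw
    exact absurd h2 (ne_of_gt hy)
  have hevq := C.EV_bounds q q hyb hyw hy
  rw [show EV q (C.u q) = C.ev q from rfl] at hevq
  obtain ⟨hmem, hall⟩ := C.hrmax _ (pair_nonempty q (C.m α))
  have hL := C.c_pair_left q (C.m α)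
  have hR := C.c_pair_right q (C.m α)
  rcases Finset.mem_insert.mp hmem with hr | hr
  · rw [hr, C.EV_m_u, cl_eq h0 h1] at hL hR
    exact ⟨hL, hR⟩
  · rw [Finset.mem_singleton] at hr
    have hRmq : C.R (C.m α) q := by have := hall q (by simp); rwa [hr] at this
    by_cases hmid : q.1 C.bI < α ∧ α < 1 - q.1 C.wI
    · exfalso
      have hq_le : C.R q (C.m α) := by
        have h := C.R_spread (q := q) (β := 0) le_rfl one_pos hmid.1 hmid.2
        have hzero : mixL 0 q (C.m α) = C.m α := by
          apply Subtype.ext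
          show cl 0 • q.1 + (1 - cl 0) • (C.m α).1 = (C.m α).1
          rw [cl_eq le_rfl zero_le_one]
          simp
        rwa [hzero] at h
      exact hqm (C.Rantisymm hq_le hRmq)
    · rw [hr, C.EV_m_u, cl_eq h0 h1] at hL hR
      have hEb := C.EV_bounds q (C.m α) hyb hyw hy
      push_neg at hmid
      rcases le_or_gt α (q.1 C.bI) with hcase | hcase
      · constructor
        · exact iff_of_true (hL.mpr (by linarith [hEb.1])) (by linarith [hevq.1])
        · exact iff_of_false (fun hh => by have := hR.mp hh; linarith [hEb.1])
            (by push_neg; linarith [hevq.1])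
      · have hcase2 : 1 - q.1 C.wI ≤ α := hmid hcase
        constructor
        · exact iff_of_false (fun hh => by have := hL.mp hh; linarith [hEb.2])
            (by push_neg; linarith [hevq.2])
        · exact iff_of_true (hR.mpr (by linarith [hEb.2])) (by linarith [hevq.2])

lemma tr {p q s : Lot X} (h1 : p ∈ C.c {p, q}) (h2 : q ∈ C.c {q, s}) : p ∈ C.c {p, s} :=
  C.htrans p q s (pair_nonempty p q) (pair_nonempty q s) (pair_nonempty p s) h1 h2

lemma indiff {p q : Lot X} {yp yq : ↥X}
    (hypb : yp ≠ C.bI) (hypw : yp ≠ C.wI) (hyp : 0 < p.1 yp)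
    (hyqb : yq ≠ C.bI) (hyqw : yq ≠ C.wI) (hyq : 0 < q.1 yq)
    (hev : C.ev p = C.ev q) : p ∈ C.c {p, q} ∧ q ∈ C.c {p, q} := by
  have hevp := C.ev_mem p
  have hevq := C.ev_mem q
  constructor
  · apply C.tr (q := C.m (C.ev p))
    · exact ((C.B1 hypb hypw hyp hevp.1 hevp.2).1).mpr (le_refl _)
    · have h2 := ((C.B1 (q := q) hyqb hyqw hyq (α := C.ev p) hevp.1 hevp.2).2).mpr
        (le_of_eq hev.symm)
      rwa [Finset.pair_comm q (C.m (C.ev p))] at h2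
  · have hq : q ∈ C.c {q, p} := by
      apply C.tr (q := C.m (C.ev q))
      · exact ((C.B1 hyqb hyqw hyq hevq.1 hevq.2).1).mpr (le_refl _)
      · have h2 := ((C.B1 (q := p) hypb hypw hyp (α := C.ev q) hevq.1 hevq.2).2).mpr
          (le_of_eq hev)
        rwa [Finset.pair_comm p (C.m (C.ev q))] at h2
    rwa [Finset.pair_comm q p] at hq

end Ctx

lemma cont_mixL {f g : ℝ → Lot X} {β : ℝ → ℝ} (hf : Continuous f) (hg : Continuous g)
    (hβ : Continuous β) : Continuous fun s => mixL (β s) (f s) (g s) := by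
  have : Continuous fun s =>
      (cl (β s) • (f s).1 + (1 - cl (β s)) • (g s).1 : EuclideanSpace ℝ ↥X) :=
    ((cl_cont.comp hβ).smul (continuous_subtype_val.comp hf)).add
      ((continuous_const.sub (cl_cont.comp hβ)).smul (continuous_subtype_val.comp hg))
  exact this.subtype_mk _

namespace Ctx

lemma cont_m : Continuous (fun α => C.m α) :=
  cont_mixL continuous_const continuous_const continuous_id

end Ctx

lemma hdist_pair {a₁ b₁ a₂ b₂ : Lot X} :
    Metric.hausdorffDist ({a₁, b₁} : Set (Lot X)) {a₂, b₂} ≤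
      max (dist a₁ a₂) (dist b₁ b₂) := by
  apply Metric.hausdorffDist_le_of_mem_dist (le_max_of_le_left dist_nonneg)
  · intro x hx
    rcases Set.mem_insert_iff.mp hx with rfl | hx
    · exact ⟨a₂, by simp, le_max_left _ _⟩
    · rw [Set.mem_singleton_iff] at hx; subst hx
      exact ⟨b₂, by simp, le_max_right _ _⟩
  · intro x hx
    rcases Set.mem_insert_iff.mp hx with rfl | hx
    · exact ⟨a₁, by simp, by rw [dist_comm]; exact le_max_left _ _⟩
    · rw [Set.mem_singleton_iff] at hx; subst hx
      exact ⟨b₁, by simp, by rw [dist_comm]; exact le_max_right _ _⟩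

namespace Ctx

lemma ev_seq {qs : ℕ → Lot X} {q : Lot X}
    (hws : ∀ n, ∃ y : ↥X, y ≠ C.bI ∧ y ≠ C.wI ∧ 0 < (qs n).1 y)
    (hw : ∃ y : ↥X, y ≠ C.bI ∧ y ≠ C.wI ∧ 0 < q.1 y)
    (hconv : Filter.Tendsto qs Filter.atTop (nhds q)) :
    Filter.Tendsto (fun n => C.ev (qs n)) Filter.atTop (nhds (C.ev q)) := by
  obtain ⟨y, hyb, hyw, hy⟩ := hw
  apply Filter.tendsto_of_subseq_tendsto
  intro ns hns
  obtain ⟨α, hαmem, ms, hms, hconv2⟩ := (isCompact_Icc (a := (0:ℝ)) (b := 1)).tendsto_subseq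
    (fun k => C.ev_mem (qs (ns k)))
  refine ⟨ms, ?_⟩
  have hq' : Filter.Tendsto (fun k => qs (ns (ms k))) Filter.atTop (nhds q) :=
    hconv.comp (hns.comp hms.tendsto_atTop)
  have hconv2' : Filter.Tendsto (fun k => C.ev (qs (ns (ms k)))) Filter.atTop (nhds α) := hconv2
  have hm' : Filter.Tendsto (fun k => C.m (C.ev (qs (ns (ms k))))) Filter.atTop
      (nhds (C.m α)) := (C.cont_m.tendsto α).comp hconv2'
  have hdist : Filter.Tendsto (fun k => Metric.hausdorffDist
      ((({qs (ns (ms k)), C.m (C.ev (qs (ns (ms k))))} : Finset (Lot X)) : Set (Lot X)))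
      ((({q, C.m α} : Finset (Lot X)) : Set (Lot X)))) Filter.atTop (nhds 0) := by
    apply squeeze_zero (fun k => Metric.hausdorffDist_nonneg)
      (g := fun k => max (dist (qs (ns (ms k))) q) (dist (C.m (C.ev (qs (ns (ms k))))) (C.m α)))
    · intro k
      have hcoe1 : ((({qs (ns (ms k)), C.m (C.ev (qs (ns (ms k))))} : Finset (Lot X)) :
          Set (Lot X))) = ({qs (ns (ms k)), C.m (C.ev (qs (ns (ms k))))} : Set (Lot X)) := by
        simp
      have hcoe2 : ((({q, C.m α} : Finset (Lot X)) : Set (Lot X)))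
          = ({q, C.m α} : Set (Lot X)) := by simp
      rw [hcoe1, hcoe2]
      exact hdist_pair
    · have t1 := tendsto_iff_dist_tendsto_zero.mp hq'
      have t2 := tendsto_iff_dist_tendsto_zero.mp hm'
      have := t1.max t2
      simpa using this
  have hAne : ∀ k, (({qs (ns (ms k)), C.m (C.ev (qs (ns (ms k))))} : Finset (Lot X))).Nonempty :=
    fun k => pair_nonempty _ _
  have h1 : C.m α ∈ C.c {q, C.m α} := by
    apply C.hclosed (C.m α) (fun k => C.m (C.ev (qs (ns (ms k))))) _
      (fun k => {qs (ns (ms k)), C.m (C.ev (qs (ns (ms k))))}) (pair_nonempty _ _) hAne hm' hdist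
    intro k
    obtain ⟨yk, h1k, h2k, h3k⟩ := hws (ns (ms k))
    have hevk := C.ev_mem (qs (ns (ms k)))
    exact ((C.B1 h1k h2k h3k hevk.1 hevk.2).2).mpr (le_refl _)
  have h2 : q ∈ C.c {q, C.m α} := by
    apply C.hclosed q (fun k => qs (ns (ms k))) _
      (fun k => {qs (ns (ms k)), C.m (C.ev (qs (ns (ms k))))}) (pair_nonempty _ _) hAne hq' hdist
    intro k
    obtain ⟨yk, h1k, h2k, h3k⟩ := hws (ns (ms k))
    have hevk := C.ev_mem (qs (ns (ms k)))
    exact ((C.B1 h1k h2k h3k hevk.1 hevk.2).1).mpr (le_refl _)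
  have hle1 : C.ev q ≤ α := ((C.B1 hyb hyw hy hαmem.1 hαmem.2).2).mp h1
  have hle2 : α ≤ C.ev q := ((C.B1 hyb hyw hy hαmem.1 hαmem.2).1).mp h2
  have : α = C.ev q := le_antisymm hle2 hle1
  rw [← this]
  exact hconv2'

lemma link {a b : Lot X} {y : ↥X} (hyb : y ≠ C.bI) (hyw : y ≠ C.wI)
    (hay : 0 < a.1 y) (hbfull : ∀ x, 0 < b.1 x)
    (hRab : C.R a b) (hb1 : b.1 C.bI < C.ev a) (hb2 : C.ev a < 1 - b.1 C.wI) :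
    C.u a = C.u b := by
  set E := C.ev a with hE
  have hWpos : 0 < 1 - b.1 C.wI - b.1 C.bI := by
    have h3 := lot_triple_le_one b C.bI_ne_wI (fun h => hyb h.symm) (fun h => hyw h.symm)
    have := hbfull y
    linarith
  set W := 1 - b.1 C.wI - b.1 C.bI with hW
  set β := min (1/2 : ℝ) (min ((E - b.1 C.bI)/(2*W)) ((1 - b.1 C.wI - E)/(2*W))) with hβdef
  clear_value E W β
  have hβpos : 0 < β := by
    rw [hβdef]
    exact lt_min (by norm_num) (lt_min (div_pos (by linarith) (by linarith))
      (div_pos (by linarith) (by linarith)))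
  have hβhalf : β ≤ 1/2 := by rw [hβdef]; exact min_le_left _ _
  have hβlt1 : β < 1 := by linarith
  have hβW1 : β * W < E - b.1 C.bI := by
    have hle : β ≤ (E - b.1 C.bI)/(2*W) := by
      rw [hβdef]; exact (min_le_right _ _).trans (min_le_left _ _)
    have h2 : β * W ≤ (E - b.1 C.bI)/(2*W) * W := mul_le_mul_of_nonneg_right hle hWpos.le
    have h3 : (E - b.1 C.bI)/(2*W) * W = (E - b.1 C.bI)/2 := by field_simp
    rw [h3] at h2
    linarith
  have hβW2 : β * W < 1 - b.1 C.wI - E := by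
    have hle : β ≤ (1 - b.1 C.wI - E)/(2*W) := by
      rw [hβdef]; exact (min_le_right _ _).trans (min_le_right _ _)
    have h2 : β * W ≤ (1 - b.1 C.wI - E)/(2*W) * W := mul_le_mul_of_nonneg_right hle hWpos.le
    have h3 : (1 - b.1 C.wI - E)/(2*W) * W = (1 - b.1 C.wI - E)/2 := by field_simp
    rw [h3] at h2
    linarith
  have h1β : 0 < 1 - β := by linarith
  set γm := (E - β*(1 - b.1 C.wI))/(1 - β) with hγm
  set γp := (E - β*(b.1 C.bI))/(1 - β) with hγp
  clear_value γm γp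
  have hγmlt : b.1 C.bI < γm := by
    rw [hγm, lt_div_iff₀ h1β]; rw [hW] at hβW1; nlinarith
  have hγplt : γp < 1 - b.1 C.wI := by
    rw [hγp, div_lt_iff₀ h1β]; rw [hW] at hβW2; nlinarith
  have hγmp : γm ≤ γp := by
    rw [hγm, hγp]
    have hnum : E - β*(1 - b.1 C.wI) ≤ E - β*(b.1 C.bI) := by
      nlinarith [mul_pos hβpos hWpos]
    exact (div_le_div_iff_of_pos_right h1β).mpr hnum
  have hγm0 : 0 ≤ γm := le_trans (lot_nonneg b C.bI) hγmlt.le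
  have hγp1 : γp ≤ 1 := by have := lot_nonneg b C.wI; linarith
  set t : ℝ → Lot X := fun γ => mixL β b (C.m γ) with ht
  have hclβ : cl β = β := cl_eq hβpos.le hβlt1.le
  have hty : ∀ γ, 0 < (t γ).1 y := by
    intro γ
    rw [ht]
    show 0 < (mixL β b (C.m γ)).1 y
    rw [mixL_apply, C.m_apply hyb hyw, hclβ]
    have := mul_pos hβpos (hbfull y)
    linarith
  have htb : ∀ γ ∈ Set.Icc γm γp, (t γ).1 C.bI = β * b.1 C.bI + (1-β) * γ := by
    intro γ hγ
    show (mixL β b (C.m γ)).1 C.bI = _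
    rw [mixL_apply, hclβ, C.m_apply_b, cl_eq (le_trans hγm0 hγ.1) (le_trans hγ.2 hγp1)]
  have htw : ∀ γ ∈ Set.Icc γm γp, (t γ).1 C.wI = β * b.1 C.wI + (1-β) * (1 - γ) := by
    intro γ hγ
    show (mixL β b (C.m γ)).1 C.wI = _
    rw [mixL_apply, hclβ, C.m_apply_w, cl_eq (le_trans hγm0 hγ.1) (le_trans hγ.2 hγp1)]
  have htcont : Continuous t := cont_mixL continuous_const C.cont_m continuous_const
  have hFcont : Continuous (fun γ => C.ev (t γ)) := by
    apply SeqContinuous.continuous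
    intro γs γ0 hγs
    exact C.ev_seq (fun n => ⟨y, hyb, hyw, hty (γs n)⟩) ⟨y, hyb, hyw, hty γ0⟩
      ((htcont.tendsto γ0).comp hγs)
  have hbnd : ∀ γ, (t γ).1 C.bI < C.ev (t γ) ∧ C.ev (t γ) < 1 - (t γ).1 C.wI :=
    fun γ => C.EV_bounds (t γ) (t γ) hyb hyw (hty γ)
  have hlow : C.ev (t γm) < E := by
    have h2 := (hbnd γm).2
    rw [htw γm ⟨le_refl _, hγmp⟩] at h2
    have h3 : 1 - (β*(b.1 C.wI) + (1-β)*(1-γm)) = E := by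
      rw [hγm]; field_simp; ring
    linarith
  have hhigh : E < C.ev (t γp) := by
    have h1 := (hbnd γp).1
    rw [htb γp ⟨hγmp, le_refl _⟩] at h1
    have h3 : β*(b.1 C.bI) + (1-β)*γp = E := by
      rw [hγp]; field_simp; ring
    linarith
  obtain ⟨γ0, hγ0mem, hγ0eq⟩ : ∃ γ0 ∈ Set.Icc γm γp, C.ev (t γ0) = E := by
    have hIVT := intermediate_value_Icc hγmp (hFcont.continuousOn)
    have hEmem : E ∈ Set.Icc (C.ev (t γm)) (C.ev (t γp)) := ⟨hlow.le, hhigh.le⟩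
    obtain ⟨γ0, hmem, heq⟩ := hIVT hEmem
    exact ⟨γ0, hmem, heq⟩
  set s := t γ0 with hs
  have hRbs : C.R b s :=
    C.R_spread hβpos.le hβlt1 (lt_of_lt_of_le hγmlt hγ0mem.1) (lt_of_le_of_lt hγ0mem.2 hγplt)
  have hRas : C.R a s := C.Rtrans hRab hRbs
  have hsfull : ∀ x, 0 < s.1 x := by
    intro x
    show 0 < (mixL β b (C.m γ0)).1 x
    rw [mixL_apply, hclβ]
    have hh1 := mul_pos hβpos (hbfull x)
    have hh2 := mul_nonneg (by linarith : (0:ℝ) ≤ 1 - β) (lot_nonneg (C.m γ0) x)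
    linarith
  have hEVsa : EV s (C.u a) = E := by
    by_cases has : a = s
    · rw [← has]; exact hE.symm
    · have hboth := C.indiff hyb hyw hay hyb hyw (hsfull y) (by rw [← hE, hγ0eq])
      have hr := C.r_pair hRas
      have h1 := (C.c_pair_left a s).mp hboth.1
      have h2 := (C.c_pair_right a s).mp hboth.2
      rw [hr] at h1 h2
      have := le_antisymm h1 h2
      rw [show EV a (C.u a) = C.ev a from rfl, ← hE] at this
      exact this
  have hle_us : ∀ x, C.u s x ≤ C.u a x := C.u_le_u hRas
  have hle_bs : ∀ x, C.u s x ≤ C.u b x := C.u_le_u hRbs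
  have hle_ab : ∀ x, C.u b x ≤ C.u a x := C.u_le_u hRab
  have hsum : ∑ x, s.1 x * (C.u a x - C.u s x) = 0 := by
    have hsplit : ∑ x, s.1 x * (C.u a x - C.u s x) = EV s (C.u a) - EV s (C.u s) := by
      unfold EV
      rw [← Finset.sum_sub_distrib]
      exact Finset.sum_congr rfl fun x _ => by ring
    rw [hsplit, hEVsa, show EV s (C.u s) = C.ev (t γ0) from rfl, hγ0eq]
    ring
  have hzero := (Finset.sum_eq_zero_iff_of_nonneg
    (fun x _ => mul_nonneg (lot_nonneg s x) (by linarith [hle_us x]))).mp hsum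
  have husa : ∀ x, C.u a x = C.u s x := by
    intro x
    have hx := hzero x (Finset.mem_univ x)
    rcases mul_eq_zero.mp hx with h | h
    · exact absurd h (ne_of_gt (hsfull x))
    · linarith
  funext x
  have e1 := husa x
  have e2 := hle_bs x
  have e3 := hle_ab x
  linarith

set_option maxHeartbeats 1000000 in
lemma fullRep {p : Lot X} {y : ↥X} (hyb : y ≠ C.bI) (hyw : y ≠ C.wI) (hpy : 0 < p.1 y) :
    ∃ a : Lot X, (∀ x, 0 < a.1 x) ∧ C.u a = C.u p := by
  classical
  have hwb : ((C.wI : ℝ)) < ((C.bI : ℝ)) := C.w_lt_b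
  have hwy : ((C.wI : ℝ)) < (y : ℝ) := C.w_lt_coe hyw
  have hyb' : (y : ℝ) < ((C.bI : ℝ)) := C.coe_lt_b hyb
  have hcard0 : 0 < ((X.card : ℝ)) := by
    have := Finset.card_pos.mpr C.hX
    exact_mod_cast this
  obtain ⟨U, hUapp⟩ : ∃ U : Lot X, ∀ x : ↥X, U.1 x = (X.card : ℝ)⁻¹ :=
    ⟨⟨(WithLp.toLp 2 (fun _ => (X.card : ℝ)⁻¹) : EuclideanSpace ℝ ↥X),
      fun x => inv_nonneg.mpr (Nat.cast_nonneg _), by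
      show ∑ _x : ↥X, (X.card : ℝ)⁻¹ = 1
      rw [Finset.sum_const, nsmul_eq_mul, Finset.card_univ, Fintype.card_coe]
      field_simp⟩, fun x => rfl⟩
  set μ := EV U (fun x => (x : ℝ)) with hμ
  have hμw : ((C.wI : ℝ)) ≤ μ := by
    have h1 : ∑ x : ↥X, U.1 x * ((C.wI : ℝ)) ≤ ∑ x : ↥X, U.1 x * (x : ℝ) :=
      Finset.sum_le_sum fun x _ => mul_le_mul_of_nonneg_left (C.w_le_coe x) (lot_nonneg U x)
    rw [← Finset.sum_mul, lot_sum, one_mul] at h1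
    exact h1
  have hμb : μ ≤ ((C.bI : ℝ)) := by
    have h1 : ∑ x : ↥X, U.1 x * (x : ℝ) ≤ ∑ x : ↥X, U.1 x * ((C.bI : ℝ)) :=
      Finset.sum_le_sum fun x _ => mul_le_mul_of_nonneg_left (C.coe_le_b x) (lot_nonneg U x)
    rw [← Finset.sum_mul, lot_sum, one_mul] at h1
    exact h1
  set κ := min ((y:ℝ) - (C.wI:ℝ)) ((C.bI:ℝ) - (y:ℝ)) / (2*((C.bI:ℝ) - (C.wI:ℝ))) with hκ
  clear_value μ κ
  have hκpos : 0 < κ := by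
    rw [hκ]; exact div_pos (lt_min (by linarith) (by linarith)) (by linarith)
  have hκle : κ ≤ 1/2 := by
    rw [hκ, div_le_iff₀ (by linarith)]
    have h1 : min ((y:ℝ) - (C.wI:ℝ)) ((C.bI:ℝ) - (y:ℝ)) ≤ (y:ℝ) - (C.wI:ℝ) := min_le_left _ _
    nlinarith
  have hκ1 : κ < 1 := by linarith
  have hκμ : κ*(μ - (C.wI:ℝ)) ≤ ((y:ℝ) - (C.wI:ℝ))/2 := by
    have h1 : κ*(μ - (C.wI:ℝ)) ≤ κ*((C.bI:ℝ) - (C.wI:ℝ)) :=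
      mul_le_mul_of_nonneg_left (by linarith) hκpos.le
    have h2 : κ*((C.bI:ℝ) - (C.wI:ℝ)) ≤ ((y:ℝ) - (C.wI:ℝ))/2 := by
      rw [hκ]
      rw [div_mul_eq_mul_div, div_le_div_iff₀ (by linarith) (by norm_num)]
      have := min_le_left ((y:ℝ) - (C.wI:ℝ)) ((C.bI:ℝ) - (y:ℝ))
      nlinarith
    linarith
  have hκμ2 : κ*((C.bI:ℝ) - μ) ≤ ((C.bI:ℝ) - (y:ℝ))/2 := by
    have h1 : κ*((C.bI:ℝ) - μ) ≤ κ*((C.bI:ℝ) - (C.wI:ℝ)) :=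
      mul_le_mul_of_nonneg_left (by linarith) hκpos.le
    have h2 : κ*((C.bI:ℝ) - (C.wI:ℝ)) ≤ ((C.bI:ℝ) - (y:ℝ))/2 := by
      rw [hκ]
      rw [div_mul_eq_mul_div, div_le_div_iff₀ (by linarith) (by norm_num)]
      have := min_le_right ((y:ℝ) - (C.wI:ℝ)) ((C.bI:ℝ) - (y:ℝ))
      nlinarith
    linarith
  have hden : 0 < (1-κ)*((C.bI:ℝ) - (C.wI:ℝ)) := by nlinarith
  set lam := ((y:ℝ) - (C.wI:ℝ) - κ*(μ - (C.wI:ℝ))) / ((1-κ)*((C.bI:ℝ) - (C.wI:ℝ))) with hlam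
  clear_value lam
  have hlam0 : 0 ≤ lam := by
    rw [hlam]; exact div_nonneg (by linarith) hden.le
  have hlam1 : lam ≤ 1 := by
    rw [hlam, div_le_one hden]; nlinarith
  set ν : Lot X := mixL κ U (C.m lam) with hν
  have hclκ : cl κ = κ := cl_eq hκpos.le (by linarith)
  have hνmean : EV ν (fun x => (x : ℝ)) = (y : ℝ) := by
    rw [hν, EV_mix, C.EV_m (f := fun x => (x:ℝ)), hclκ, cl_eq hlam0 hlam1, ← hμ]
    have hlam' : lam * ((1-κ)*((C.bI:ℝ) - (C.wI:ℝ)))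
        = (y:ℝ) - (C.wI:ℝ) - κ*(μ - (C.wI:ℝ)) := by
      rw [hlam]; exact div_mul_cancel₀ _ (ne_of_gt hden)
    linear_combination hlam'
  have hνpos : ∀ x, 0 < ν.1 x := by
    intro x
    show 0 < (mixL κ U (C.m lam)).1 x
    rw [mixL_apply, hclκ, hUapp]
    have h1 : 0 < κ * (X.card : ℝ)⁻¹ := mul_pos hκpos (inv_pos.mpr hcard0)
    have h2 : 0 ≤ (1-κ) * (C.m lam).1 x := mul_nonneg (by linarith) (lot_nonneg _ x)
    linarith
  have hν1 : ∀ x, ν.1 x ≤ 1 := lot_le_one ν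
  have hevp := C.EV_bounds p p hyb hyw hpy
  rw [show EV p (C.u p) = C.ev p from rfl] at hevp
  set ε := min (p.1 y/2) (min ((C.ev p - p.1 C.bI)/2) ((1 - p.1 C.wI - C.ev p)/2)) with hε
  clear_value ε
  have hεpos : 0 < ε := by
    rw [hε]; exact lt_min (by linarith) (lt_min (by linarith) (by linarith))
  have hεy : ε ≤ p.1 y/2 := by rw [hε]; exact min_le_left _ _
  have hεb : ε ≤ (C.ev p - p.1 C.bI)/2 := by
    rw [hε]; exact (min_le_right _ _).trans (min_le_left _ _)
  have hεw : ε ≤ (1 - p.1 C.wI - C.ev p)/2 := by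
    rw [hε]; exact (min_le_right _ _).trans (min_le_right _ _)
  have havpos : ∀ x : ↥X, 0 < p.1 x + ε * (ν.1 x - (deg y).1 x) := by
    intro x
    rw [deg_apply]
    by_cases hxy : x = y
    · rw [if_pos hxy, hxy]
      nlinarith [hνpos y, hν1 y, lot_nonneg p y]
    · rw [if_neg hxy]
      have := mul_pos hεpos (hνpos x)
      have := lot_nonneg p x
      nlinarith
  obtain ⟨a, haapp⟩ : ∃ a : Lot X, ∀ x : ↥X, a.1 x = p.1 x + ε * (ν.1 x - (deg y).1 x) :=
    ⟨⟨(WithLp.toLp 2 (fun x => p.1 x + ε * (ν.1 x - (deg y).1 x)) : EuclideanSpace ℝ ↥X),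
      fun x => (havpos x).le, by
      show ∑ x : ↥X, (p.1 x + ε * (ν.1 x - (deg y).1 x)) = 1
      rw [Finset.sum_add_distrib, ← Finset.mul_sum, Finset.sum_sub_distrib,
        lot_sum, lot_sum, lot_sum]
      ring⟩, fun x => rfl⟩
  have hafull : ∀ x, 0 < a.1 x := fun x => by rw [haapp]; exact havpos x
  -- a is a mean preserving spread of p
  have haMPS : MPS a p := by
    refine ⟨?_, ?_, ?_⟩
    · intro h
      have hval : a.1 C.wI = p.1 C.wI := by rw [h]
      rw [haapp C.wI, deg_apply, if_neg (fun hh => hyw hh.symm)] at hval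
      nlinarith [mul_pos hεpos (hνpos C.wI)]
    · have hterm : ∀ x : ↥X, a.1 x * (x:ℝ)
          = p.1 x * (x:ℝ) + ε * (ν.1 x * (x:ℝ) - (deg y).1 x * (x:ℝ)) := by
        intro x; rw [haapp]; ring
      rw [Finset.sum_congr rfl fun x _ => hterm x, Finset.sum_add_distrib, ← Finset.mul_sum,
        Finset.sum_sub_distrib]
      rw [show (∑ x : ↥X, ν.1 x * (x:ℝ)) = EV ν (fun x => (x:ℝ)) from rfl,
        show (∑ x : ↥X, (deg y).1 x * (x:ℝ)) = EV (deg y) (fun x => (x:ℝ)) from rfl,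
        hνmean, EV_deg]
      ring
    · intro z
      have hφconv : ConvexOn ℝ Set.univ (fun t : ℝ => max (z - t) 0) := by
        constructor
        · exact convex_univ
        · intro x1 _ x2 _ sc tc hs ht hst
          simp only [smul_eq_mul]
          apply max_le
          · have h1 : z - (sc*x1 + tc*x2) = sc*(z - x1) + tc*(z - x2) := by
              linear_combination (z : ℝ) * hst.symm
            rw [h1]
            exact add_le_add (mul_le_mul_of_nonneg_left (le_max_left _ _) hs)
              (mul_le_mul_of_nonneg_left (le_max_left _ _) ht)
          · exact add_nonneg (mul_nonneg hs (le_max_right _ _))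
              (mul_nonneg ht (le_max_right _ _))
      have hJ : max (z - (y:ℝ)) 0 ≤ ∑ x : ↥X, ν.1 x * max (z - (x:ℝ)) 0 := by
        have hJen := hφconv.map_sum_le (t := Finset.univ) (w := fun x : ↥X => ν.1 x)
          (p := fun x : ↥X => (x:ℝ)) (fun i _ => lot_nonneg ν i) (lot_sum ν)
          (fun i _ => Set.mem_univ _)
        simp only [smul_eq_mul] at hJen
        rwa [show (∑ x : ↥X, ν.1 x * (x:ℝ)) = EV ν (fun x => (x:ℝ)) from rfl, hνmean] at hJen
      have hterm : ∀ x : ↥X, a.1 x * max (z - (x:ℝ)) 0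
          = p.1 x * max (z - (x:ℝ)) 0
            + ε * (ν.1 x * max (z - (x:ℝ)) 0 - (deg y).1 x * max (z - (x:ℝ)) 0) := by
        intro x; rw [haapp]; ring
      rw [Finset.sum_congr rfl fun x _ => hterm x, Finset.sum_add_distrib, ← Finset.mul_sum,
        Finset.sum_sub_distrib]
      rw [show (∑ x : ↥X, (deg y).1 x * max (z - (x:ℝ)) 0)
          = EV (deg y) (fun x => max (z - (x:ℝ)) 0) from rfl, EV_deg]
      nlinarith [hJ, hεpos]
  have hRpa : C.R p a := C.hrc a p (Or.inl haMPS)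
  have hab : a.1 C.bI < C.ev p := by
    rw [haapp C.bI, deg_apply, if_neg (fun hh => hyb hh.symm)]
    nlinarith [hν1 C.bI, hνpos C.bI]
  have haw : C.ev p < 1 - a.1 C.wI := by
    rw [haapp C.wI, deg_apply, if_neg (fun hh => hyw hh.symm)]
    nlinarith [hν1 C.wI, hνpos C.wI]
  exact ⟨a, hafull, (C.link hyb hyw hpy hafull hRpa hab haw).symm⟩

set_option maxHeartbeats 1000000 in
lemma main {p₁ p₂ : Lot X} (h1 : ¬ inBW C.hX p₁) (h2 : ¬ inBW C.hX p₂) :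
    C.u p₁ = C.u p₂ := by
  obtain ⟨y, hyb, hyw, hy1⟩ := C.not_inBW_witness h1
  obtain ⟨y2, hy2b, hy2w, hy2⟩ := C.not_inBW_witness h2
  obtain ⟨a₁, hfull₁, hu₁⟩ := C.fullRep hyb hyw hy1
  obtain ⟨a₂, hfull₂, hu₂⟩ := C.fullRep hy2b hy2w hy2
  suffices h : C.u a₁ = C.u a₂ by rw [← hu₁, ← hu₂]; exact h
  set P : ℝ → Lot X := fun s => mixL (1 - s) a₁ a₂ with hP
  have hPapp : ∀ s x, (P s).1 x = cl (1-s) * a₁.1 x + (1 - cl (1-s)) * a₂.1 x :=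
    fun s x => mixL_apply _ _ _ _
  have hPfull : ∀ s x, 0 < (P s).1 x := by
    intro s x
    rw [hPapp]
    have h0 := cl_nonneg (1-s); have h1' := cl_le_one (1-s)
    rcases lt_or_eq_of_le h0 with hpos | heq
    · nlinarith [mul_pos hpos (hfull₁ x),
        mul_nonneg (by linarith : (0:ℝ) ≤ 1 - cl (1-s)) (hfull₂ x).le]
    · rw [← heq]
      nlinarith [hfull₂ x]
  have hP0 : P 0 = a₁ := by
    apply Subtype.ext
    show cl (1-0) • a₁.1 + (1 - cl (1-0)) • a₂.1 = a₁.1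
    rw [show cl (1-(0:ℝ)) = 1 by rw [show (1:ℝ) - 0 = 1 by norm_num, cl_eq zero_le_one le_rfl]]
    simp
  have hP1 : P 1 = a₂ := by
    apply Subtype.ext
    show cl (1-1) • a₁.1 + (1 - cl (1-1)) • a₂.1 = a₂.1
    rw [show cl (1-(1:ℝ)) = 0 by rw [show (1:ℝ) - 1 = 0 by norm_num, cl_eq le_rfl zero_le_one]]
    simp
  have hPcont : Continuous P :=
    cont_mixL continuous_const continuous_const (continuous_const.sub continuous_id)
  have hevcont : Continuous (fun s => C.ev (P s)) := by
    apply SeqContinuous.continuous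
    intro ss s0 hss
    exact C.ev_seq (fun n => ⟨y, hyb, hyw, hPfull _ y⟩) ⟨y, hyb, hyw, hPfull _ y⟩
      ((hPcont.tendsto s0).comp hss)
  have hbcont : Continuous (fun s => (P s).1 C.bI) := by
    have heq : (fun s => (P s).1 C.bI)
        = fun s => cl (1-s) * a₁.1 C.bI + (1 - cl (1-s)) * a₂.1 C.bI :=
      funext fun s => hPapp s C.bI
    rw [heq]
    have hc : Continuous fun s : ℝ => cl (1-s) :=
      cl_cont.comp (continuous_const.sub continuous_id)
    exact (hc.mul continuous_const).add ((continuous_const.sub hc).mul continuous_const)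
  have hwcont : Continuous (fun s => (P s).1 C.wI) := by
    have heq : (fun s => (P s).1 C.wI)
        = fun s => cl (1-s) * a₁.1 C.wI + (1 - cl (1-s)) * a₂.1 C.wI :=
      funext fun s => hPapp s C.wI
    rw [heq]
    have hc : Continuous fun s : ℝ => cl (1-s) :=
      cl_cont.comp (continuous_const.sub continuous_id)
    exact (hc.mul continuous_const).add ((continuous_const.sub hc).mul continuous_const)
  have hloc : ∀ s : ℝ, ∃ δ > 0, ∀ s', dist s' s < δ → C.u (P s') = C.u (P s) := by
    intro s
    have hb := C.EV_bounds (P s) (P s) hyb hyw (hPfull s y)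
    rw [show EV (P s) (C.u (P s)) = C.ev (P s) from rfl] at hb
    have e1 : ∀ᶠ s' in nhds s, (P s').1 C.bI < C.ev (P s) :=
      (hbcont.tendsto s).eventually_lt_const hb.1
    have e2 : ∀ᶠ s' in nhds s, C.ev (P s) < 1 - (P s').1 C.wI := by
      have ht : Filter.Tendsto (fun s' => 1 - (P s').1 C.wI) (nhds s)
          (nhds (1 - (P s).1 C.wI)) := (continuous_const.sub hwcont).tendsto s
      exact ht.eventually_const_lt hb.2
    have e3 : ∀ᶠ s' in nhds s, (P s).1 C.bI < C.ev (P s') :=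
      (hevcont.tendsto s).eventually_const_lt hb.1
    have e4 : ∀ᶠ s' in nhds s, C.ev (P s') < 1 - (P s).1 C.wI :=
      (hevcont.tendsto s).eventually_lt_const hb.2
    have hall := (e1.and e2).and (e3.and e4)
    rw [Metric.eventually_nhds_iff] at hall
    obtain ⟨δ, hδpos, hδ⟩ := hall
    refine ⟨δ, hδpos, fun s' hs' => ?_⟩
    obtain ⟨⟨c1, c2⟩, c3, c4⟩ := hδ hs'
    rcases C.Rtotal (P s) (P s') with hR | hR
    · exact (C.link hyb hyw (hPfull s y) (hPfull s') hR c1 c2).symm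
    · exact C.link hyb hyw (hPfull s' y) (hPfull s) hR c3 c4
  set T : Set ℝ := {s | s ∈ Set.Icc (0:ℝ) 1 ∧ C.u (P s) = C.u (P 0)} with hT
  have h0T : (0:ℝ) ∈ T := ⟨⟨le_refl 0, zero_le_one⟩, rfl⟩
  have hTne : T.Nonempty := ⟨0, h0T⟩
  have hTbdd : BddAbove T := ⟨1, fun t ht => ht.1.2⟩
  set σ := sSup T with hσ
  have hσ0 : 0 ≤ σ := le_csSup hTbdd h0T
  have hσ1 : σ ≤ 1 := csSup_le hTne fun t ht => ht.1.2
  obtain ⟨δ, hδpos, hδ⟩ := hloc σ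
  have hσT : C.u (P σ) = C.u (P 0) := by
    obtain ⟨s', hs'T, hs'gt⟩ := exists_lt_of_lt_csSup hTne
      (show σ - δ < sSup T by rw [← hσ]; linarith)
    have hs'le : s' ≤ σ := le_csSup hTbdd hs'T
    have hd : dist s' σ < δ := by
      rw [Real.dist_eq, abs_lt]; constructor <;> linarith
    rw [← hδ s' hd]
    exact hs'T.2
  have hσeq : σ = 1 := by
    by_contra hne
    have hσlt : σ < 1 := lt_of_le_of_ne hσ1 hne
    have hgt : σ < min 1 (σ + δ/2) := lt_min hσlt (by linarith)
    have hd2 : dist (min 1 (σ + δ/2)) σ < δ := by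
      rw [Real.dist_eq, abs_lt]
      constructor
      · linarith
      · have hle : min 1 (σ + δ/2) ≤ σ + δ/2 := min_le_right _ _
        linarith
    have hmem : min 1 (σ + δ/2) ∈ T := by
      refine ⟨⟨le_trans hσ0 hgt.le, min_le_left _ _⟩, ?_⟩
      rw [hδ _ hd2]
      exact hσT
    have := le_csSup hTbdd hmem
    rw [← hσ] at this
    linarith
  rw [hσeq, hP1] at hσT
  rw [hP0] at hσT
  exact hσT.symm

end Ctx

end AREUaux


/-- Lemma 6: in a normalized AREU representation of a choice
correspondence satisfying Transitivity over `𝒜`, all utilities indexed by lotteries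
outside `Δ({b,w})` coincide. -/
theorem stmt16 (X : Finset ℝ) (hX : X.Nonempty) (hcard : 2 ≤ X.card)
    (c : Finset (Lot X) → Finset (Lot X))
    (hc : ∀ A : Finset (Lot X), A.Nonempty → c A ⊆ A ∧ (c A).Nonempty)
    (R : Lot X → Lot X → Prop) (u : Lot X → ↥X → ℝ) (r : Finset (Lot X) → Lot X)
    (hrep : IsAREU hX c R u r)
    (hnorm : ∀ p : Lot X, u p (wIdx hX) = 0 ∧ u p (bIdx hX) = 1)
    (htrans : TransOver c {A : Finset (Lot X) | A.Nonempty}) :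
    ∀ p₁ p₂ : Lot X, ¬ inBW hX p₁ → ¬ inBW hX p₂ → u p₁ = u p₂ := by
  intro p₁ p₂ h1 h2
  exact AREUaux.Ctx.main ⟨hX, hcard, c, R, u, r, hrep, hnorm, htrans⟩ h1 h2

end
end
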